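/- arXiv:1601.04937 — 3 statements merged into one kernel-verified Lean document; each statement's English description precedes it below -/
import Mathlib

section
/- Let A, B, C be independent standard Gaussian random points in the plane (mean zero, identity covariance). The probability that the origin lies in the convex hull of {A, B, C} equals 1/4. -/
open MeasureTheory ProbabilityTheory Set

noncomputable def stdGaussian2 : Measure (EuclideanSpace ℝ (Fin 2)) :=
  (Measure.pi fun _ => gaussianReal 0 1).map (WithLp.toLp 2)

namespace CaptureAux

abbrev E2 := EuclideanSpace ℝ (Fin 2)
abbrev P3 := E2 × E2 × E2

noncomputable def dt (x y : E2) : ℝ := x 0 * y 1 - x 1 * y 0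

/-! ### Convex geometry -/

lemma hull_triple_iff (x y z : E2) :
    (0:E2) ∈ convexHull ℝ ({x, y, z} : Set E2) ↔
      ∃ α β γ : ℝ, 0 ≤ α ∧ 0 ≤ β ∧ 0 ≤ γ ∧ α + β + γ = 1 ∧ α • x + β • y + γ • z = 0 := by
  rw [convexHull_insert (by simp : ({y,z} : Set E2).Nonempty), convexHull_pair, mem_convexJoin]
  constructor
  · rintro ⟨u, hu, w, hw, h0⟩
    simp only [mem_singleton_iff] at hu
    subst hu
    obtain ⟨p, q, hp, hq, hpq, rfl⟩ := hw
    obtain ⟨θ, φ, hθ, hφ, hθφ, h⟩ := h0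
    exact ⟨θ, φ*p, φ*q, hθ, by positivity, by positivity, by nlinarith,
      by rw [← h]; simp only [smul_add, mul_smul]; abel⟩
  · rintro ⟨α, β, γ, hα, hβ, hγ, hsum, heq⟩
    by_cases hβγ : β + γ = 0
    · refine ⟨x, rfl, y, ⟨1, 0, one_pos.le, le_refl 0, by ring, by simp⟩, 1, 0, one_pos.le,
        le_refl 0, by ring, ?_⟩
      have hβ0 : β = 0 := by linarith
      have hγ0 : γ = 0 := by linarith
      have hα1 : α = 1 := by linarith
      subst hβ0; subst hγ0; subst hα1
      simpa using heq
    · have hβγ' : 0 < β + γ := lt_of_le_of_ne (by positivity) (Ne.symm hβγ)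
      refine ⟨x, rfl, (β/(β+γ)) • y + (γ/(β+γ)) • z,
        ⟨β/(β+γ), γ/(β+γ), by positivity, by positivity, by field_simp, rfl⟩,
        α, β+γ, hα, hβγ'.le, by linarith, ?_⟩
      rw [smul_add, smul_smul, smul_smul, mul_div_cancel₀ _ hβγ, mul_div_cancel₀ _ hβγ]
      rw [← add_assoc]; exact heq

lemma indep_of_dt {a b : E2} (hab : dt a b ≠ 0) {P Q : ℝ}
    (h : P • a + Q • b = 0) : P = 0 ∧ Q = 0 := by
  have h0 : P * a 0 + Q * b 0 = 0 := by
    have := congrArg (fun v : E2 => v 0) h; simpa [PiLp.smul_apply, PiLp.add_apply] using this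
  have h1 : P * a 1 + Q * b 1 = 0 := by
    have := congrArg (fun v : E2 => v 1) h; simpa [PiLp.smul_apply, PiLp.add_apply] using this
  unfold dt at hab
  constructor
  · have : P * (a 0 * b 1 - a 1 * b 0) = 0 := by linear_combination b 1 * h0 - b 0 * h1
    exact (mul_eq_zero.1 this).resolve_right hab
  · have : Q * (a 0 * b 1 - a 1 * b 0) = 0 := by linear_combination a 0 * h1 - a 1 * h0
    exact (mul_eq_zero.1 this).resolve_right hab

lemma decomp {a b c : E2} (hab : dt a b ≠ 0) :
    (dt c b / dt a b) • a + (dt a c / dt a b) • b = c := by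
  ext i
  simp only [PiLp.smul_apply, PiLp.add_apply, smul_eq_mul]
  unfold dt at *
  have hab' : b 1 * a 0 - b 0 * a 1 ≠ 0 := by intro h; apply hab; linarith
  fin_cases i <;> simp only [Fin.zero_eta, Fin.mk_one] <;> field_simp <;> ring

lemma captures_iff {a b c : E2} (hab : dt a b ≠ 0) (hcb : dt c b ≠ 0) (hac : dt a c ≠ 0) :
    ((0:E2) ∈ convexHull ℝ ({a, b, c} : Set E2)) ↔
      (dt c b / dt a b < 0 ∧ dt a c / dt a b < 0) := by
  set s := dt c b / dt a b with hs
  set t := dt a c / dt a b with ht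
  have hs0 : s ≠ 0 := div_ne_zero hcb hab
  have ht0 : t ≠ 0 := div_ne_zero hac hab
  have hdec : s • a + t • b = c := decomp hab
  rw [hull_triple_iff]
  constructor
  · rintro ⟨α, β, γ, hα, hβ, hγ, hsum, heq⟩
    have key : (α + γ * s) • a + (β + γ * t) • b = 0 := by
      rw [← hdec] at heq; rw [← heq]; module
    obtain ⟨hA, hB⟩ := indep_of_dt hab key
    have hγpos : 0 < γ := by
      rcases hγ.lt_or_eq with h | h
      · exact h
      · exfalso
        rw [← h] at hA hB hsum
        simp only [zero_mul, add_zero] at hA hB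
        rw [hA, hB] at hsum; norm_num at hsum
    constructor
    · have hseq : s = -(α / γ) := by field_simp; linarith
      rcases (div_nonneg hα hγpos.le).lt_or_eq with h | h
      · rw [hseq]; linarith
      · exfalso; apply hs0; rw [hseq, ← h]; ring
    · have hteq : t = -(β / γ) := by field_simp; linarith
      rcases (div_nonneg hβ hγpos.le).lt_or_eq with h | h
      · rw [hteq]; linarith
      · exfalso; apply ht0; rw [hteq, ← h]; ring
  · rintro ⟨hsneg, htneg⟩
    set w : ℝ := -s - t + 1 with hw
    have hwpos : 0 < w := by simp only [hw]; linarith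
    refine ⟨-s/w, -t/w, 1/w, div_nonneg (by linarith) hwpos.le,
      div_nonneg (by linarith) hwpos.le, by positivity, by field_simp; ring, ?_⟩
    rw [← hdec]
    match_scalars <;> field_simp <;> ring

/-! ### Basic measure facts -/

lemma toLpPres : MeasurePreserving (MeasurableEquiv.toLp 2 (Fin 2 → ℝ))
    (Measure.pi fun _ => gaussianReal 0 1) stdGaussian2 :=
  ⟨(MeasurableEquiv.toLp 2 (Fin 2 → ℝ)).measurable, rfl⟩

instance : IsProbabilityMeasure stdGaussian2 :=
  Measure.isProbabilityMeasure_map (WithLp.measurable_toLp 2 _).aemeasurable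

lemma gauss_map_neg : (gaussianReal 0 1).map (fun x : ℝ => -x) = gaussianReal 0 1 := by
  have h := gaussianReal_map_const_mul (μ := 0) (v := 1) (-1)
  simp only [neg_mul, one_mul, mul_zero] at h
  convert h using 2
  all_goals first
  | (funext x; ring)
  | (exact (Subtype.ext (by norm_num)).symm)

lemma finTwoPres : MeasurePreserving
    (fun x : E2 => (MeasurableEquiv.finTwoArrow : (Fin 2 → ℝ) ≃ᵐ ℝ × ℝ) (WithLp.ofLp x))
    stdGaussian2 ((gaussianReal 0 1).prod (gaussianReal 0 1)) :=
  (measurePreserving_finTwoArrow _).comp toLpPres.symm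

lemma negPres : MeasurePreserving (fun x : E2 => -x) stdGaussian2 stdGaussian2 :=
  (toLpPres.comp (measurePreserving_pi _ _ (fun _ => ⟨measurable_neg, gauss_map_neg⟩))).comp
    toLpPres.symm

lemma gauss_singleton (x : ℝ) : gaussianReal 0 1 {x} = 0 :=
  gaussianReal_absolutelyContinuous 0 one_ne_zero (by simp)

lemma coord_zero_null : stdGaussian2 {b : E2 | b 0 = 0} = 0 := by
  have hT : MeasurableSet {x : ℝ × ℝ | x.1 = 0} :=
    measurableSet_eq_fun measurable_fst measurable_const
  have h2 : ((gaussianReal 0 1).prod (gaussianReal 0 1)) {x : ℝ × ℝ | x.1 = 0} = 0 := by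
    rw [Measure.measure_prod_null hT]
    have hx0 : ∀ᵐ x ∂(gaussianReal 0 1), x ≠ 0 := by
      refine ae_iff.2 ?_
      convert gauss_singleton 0 using 2
      ext y; simp
    filter_upwards [hx0] with x hx
    have : (Prod.mk x ⁻¹' {p : ℝ × ℝ | p.1 = 0}) = (∅ : Set ℝ) := by
      ext y; simp only [mem_preimage, mem_setOf_eq, mem_empty_iff_false, iff_false]; exact hx
    rw [this]; exact measure_empty
  exact (finTwoPres.measure_preimage hT.nullMeasurableSet).trans h2

lemma ae_coord_ne : ∀ᵐ a ∂stdGaussian2, (a : E2) 0 ≠ 0 := by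
  refine ae_iff.2 ?_
  convert coord_zero_null using 2
  ext y; simp

lemma line_null {a : E2} (ha : a 0 ≠ 0) : stdGaussian2 {b : E2 | dt a b = 0} = 0 := by
  have hm : Measurable fun x : ℝ × ℝ => a 0 * x.2 - a 1 * x.1 :=
    (measurable_const.mul measurable_snd).sub (measurable_const.mul measurable_fst)
  have hT : MeasurableSet {x : ℝ × ℝ | a 0 * x.2 - a 1 * x.1 = 0} :=
    measurableSet_eq_fun hm measurable_const
  have h2 : ((gaussianReal 0 1).prod (gaussianReal 0 1))
      {x : ℝ × ℝ | a 0 * x.2 - a 1 * x.1 = 0} = 0 := by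
    rw [Measure.measure_prod_null hT]
    refine Filter.Eventually.of_forall fun x => ?_
    show (gaussianReal 0 1) (Prod.mk x ⁻¹' {p : ℝ × ℝ | a 0 * p.2 - a 1 * p.1 = 0}) = 0
    have : (Prod.mk x ⁻¹' {p : ℝ × ℝ | a 0 * p.2 - a 1 * p.1 = 0}) = {a 1 * x / a 0} := by
      ext y
      simp only [mem_preimage, mem_setOf_eq, mem_singleton_iff]
      constructor
      · intro h; field_simp; linarith
      · intro h; subst h; field_simp; ring
    rw [this]; exact gauss_singleton _
  exact (finTwoPres.measure_preimage hT.nullMeasurableSet).trans h2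

lemma line_null' {b : E2} (hb : b 0 ≠ 0) : stdGaussian2 {c : E2 | dt c b = 0} = 0 := by
  have : {c : E2 | dt c b = 0} = {c : E2 | dt b c = 0} := by
    ext c; simp only [dt, mem_setOf_eq]; constructor <;> intro h <;> linarith
  rw [this]; exact line_null hb

noncomputable def ν3 : Measure P3 := stdGaussian2.prod (stdGaussian2.prod stdGaussian2)

instance : IsProbabilityMeasure ν3 := by unfold ν3; infer_instance

lemma meas_dt {δ : Type*} [MeasurableSpace δ] {f g : δ → E2} (hf : Measurable f)
    (hg : Measurable g) : Measurable (fun p => dt (f p) (g p)) :=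
  (((measurable_pi_apply 0).comp ((WithLp.measurable_ofLp 2 _).comp hf)).mul ((measurable_pi_apply 1).comp ((WithLp.measurable_ofLp 2 _).comp hg))).sub
    (((measurable_pi_apply 1).comp ((WithLp.measurable_ofLp 2 _).comp hf)).mul ((measurable_pi_apply 0).comp ((WithLp.measurable_ofLp 2 _).comp hg)))

lemma hDab : Measurable (fun p : P3 => dt p.1 p.2.1) :=
  meas_dt measurable_fst (measurable_fst.comp measurable_snd)
lemma hDcb : Measurable (fun p : P3 => dt p.2.2 p.2.1) :=
  meas_dt (measurable_snd.comp measurable_snd) (measurable_fst.comp measurable_snd)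
lemma hDac : Measurable (fun p : P3 => dt p.1 p.2.2) :=
  meas_dt measurable_fst (measurable_snd.comp measurable_snd)

lemma Z1null : ν3 {p : P3 | dt p.1 p.2.1 = 0} = 0 := by
  have hmes : MeasurableSet {p : P3 | dt p.1 p.2.1 = 0} :=
    measurableSet_eq_fun hDab measurable_const
  rw [ν3, Measure.measure_prod_null hmes]
  filter_upwards [ae_coord_ne] with a ha
  show (stdGaussian2.prod stdGaussian2) (Prod.mk a ⁻¹' {p : P3 | dt p.1 p.2.1 = 0}) = 0
  have : Prod.mk a ⁻¹' {p : P3 | dt p.1 p.2.1 = 0} = {b : E2 | dt a b = 0} ×ˢ (univ : Set E2) := by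
    ext q; simp [Set.mem_prod]
  rw [this, Measure.prod_prod, line_null ha, zero_mul]

lemma Wnull : (stdGaussian2.prod stdGaussian2) {q : E2 × E2 | dt q.2 q.1 = 0} = 0 := by
  have hmes : MeasurableSet {q : E2 × E2 | dt q.2 q.1 = 0} :=
    measurableSet_eq_fun (meas_dt measurable_snd measurable_fst) measurable_const
  rw [Measure.measure_prod_null hmes]
  filter_upwards [ae_coord_ne] with b hb
  show stdGaussian2 (Prod.mk b ⁻¹' {q : E2 × E2 | dt q.2 q.1 = 0}) = 0
  have : Prod.mk b ⁻¹' {q : E2 × E2 | dt q.2 q.1 = 0} = {c : E2 | dt c b = 0} := rfl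
  rw [this]; exact line_null' hb

lemma Z2null : ν3 {p : P3 | dt p.2.2 p.2.1 = 0} = 0 := by
  have hmes : MeasurableSet {p : P3 | dt p.2.2 p.2.1 = 0} :=
    measurableSet_eq_fun hDcb measurable_const
  rw [ν3, Measure.measure_prod_null hmes]
  refine Filter.Eventually.of_forall fun a => ?_
  show (stdGaussian2.prod stdGaussian2) (Prod.mk a ⁻¹' {p : P3 | dt p.2.2 p.2.1 = 0}) = 0
  have : Prod.mk a ⁻¹' {p : P3 | dt p.2.2 p.2.1 = 0} = {q : E2 × E2 | dt q.2 q.1 = 0} := rfl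
  rw [this]; exact Wnull

lemma Z3null : ν3 {p : P3 | dt p.1 p.2.2 = 0} = 0 := by
  have hmes : MeasurableSet {p : P3 | dt p.1 p.2.2 = 0} :=
    measurableSet_eq_fun hDac measurable_const
  rw [ν3, Measure.measure_prod_null hmes]
  filter_upwards [ae_coord_ne] with a ha
  show (stdGaussian2.prod stdGaussian2) (Prod.mk a ⁻¹' {p : P3 | dt p.1 p.2.2 = 0}) = 0
  have : Prod.mk a ⁻¹' {p : P3 | dt p.1 p.2.2 = 0} = (univ : Set E2) ×ˢ {c : E2 | dt a c = 0} := by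
    ext q; simp [Set.mem_prod]
  rw [this, Measure.prod_prod, line_null ha, mul_zero]


lemma dt_neg_left (x y : E2) : dt (-x) y = -dt x y := by
  simp only [dt]; rw [PiLp.neg_apply, PiLp.neg_apply]; ring
lemma dt_neg_right (x y : E2) : dt x (-y) = -dt x y := by
  simp only [dt]; rw [PiLp.neg_apply, PiLp.neg_apply]; ring

noncomputable def SS (p : P3) : ℝ := dt p.2.2 p.2.1 / dt p.1 p.2.1
noncomputable def TT (p : P3) : ℝ := dt p.1 p.2.2 / dt p.1 p.2.1
def G3 : Set P3 := {p | dt p.1 p.2.1 ≠ 0 ∧ dt p.2.2 p.2.1 ≠ 0 ∧ dt p.1 p.2.2 ≠ 0}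
def A1 : Set P3 := G3 ∩ {p | SS p < 0 ∧ TT p < 0}
def A2 : Set P3 := G3 ∩ {p | 0 < SS p ∧ TT p < 0}
def A3 : Set P3 := G3 ∩ {p | SS p < 0 ∧ 0 < TT p}
def A4 : Set P3 := G3 ∩ {p | 0 < SS p ∧ 0 < TT p}

lemma hG3 : MeasurableSet G3 :=
  ((measurableSet_eq_fun hDab measurable_const).compl).inter
    (((measurableSet_eq_fun hDcb measurable_const).compl).inter
      ((measurableSet_eq_fun hDac measurable_const).compl))
lemma hSS : Measurable SS := hDcb.div hDab
lemma hTT : Measurable TT := hDac.div hDab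
lemma hA1 : MeasurableSet A1 := hG3.inter
  ((measurableSet_lt hSS measurable_const).inter (measurableSet_lt hTT measurable_const))
lemma hA2 : MeasurableSet A2 := hG3.inter
  ((measurableSet_lt measurable_const hSS).inter (measurableSet_lt hTT measurable_const))
lemma hA3 : MeasurableSet A3 := hG3.inter
  ((measurableSet_lt hSS measurable_const).inter (measurableSet_lt measurable_const hTT))
lemma hA4 : MeasurableSet A4 := hG3.inter
  ((measurableSet_lt measurable_const hSS).inter (measurableSet_lt measurable_const hTT))

lemma T1_pre : (fun p : P3 => ((-p.1, p.2) : P3)) ⁻¹' A2 = A1 := by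
  ext p
  simp only [A1, A2, G3, SS, TT, mem_inter_iff, mem_setOf_eq, mem_preimage,
    dt_neg_left, div_neg, neg_div, neg_neg, neg_ne_zero, neg_pos, neg_lt_zero]
  try tauto

lemma T2_pre : (fun p : P3 => ((p.1, -p.2.1, p.2.2) : P3)) ⁻¹' A3 = A1 := by
  ext p
  simp only [A1, A3, G3, SS, TT, mem_inter_iff, mem_setOf_eq, mem_preimage,
    dt_neg_left, dt_neg_right, div_neg, neg_div, neg_neg, neg_ne_zero, neg_pos, neg_lt_zero]
  try tauto

lemma T3_pre : (fun p : P3 => ((-p.1, -p.2.1, p.2.2) : P3)) ⁻¹' A4 = A1 := by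
  ext p
  simp only [A1, A4, G3, SS, TT, mem_inter_iff, mem_setOf_eq, mem_preimage,
    dt_neg_left, dt_neg_right, div_neg, neg_div, neg_neg, neg_ne_zero, neg_pos, neg_lt_zero]
  try tauto

lemma T1_pres : MeasurePreserving (fun p : P3 => ((-p.1, p.2) : P3)) ν3 ν3 :=
  negPres.prod (MeasurePreserving.id _)
lemma T2_pres : MeasurePreserving (fun p : P3 => ((p.1, -p.2.1, p.2.2) : P3)) ν3 ν3 :=
  (MeasurePreserving.id _).prod (negPres.prod (MeasurePreserving.id _))
lemma T3_pres : MeasurePreserving (fun p : P3 => ((-p.1, -p.2.1, p.2.2) : P3)) ν3 ν3 :=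
  negPres.prod (negPres.prod (MeasurePreserving.id _))

lemma eqA2 : ν3 A2 = ν3 A1 := by
  rw [← T1_pres.measure_preimage hA2.nullMeasurableSet, T1_pre]
lemma eqA3 : ν3 A3 = ν3 A1 := by
  rw [← T2_pres.measure_preimage hA3.nullMeasurableSet, T2_pre]
lemma eqA4 : ν3 A4 = ν3 A1 := by
  rw [← T3_pres.measure_preimage hA4.nullMeasurableSet, T3_pre]

lemma G3_union : G3 = A1 ∪ A2 ∪ A3 ∪ A4 := by
  ext p
  simp only [A1, A2, A3, A4, mem_union, mem_inter_iff, mem_setOf_eq]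
  constructor
  · intro hG
    have hs : SS p ≠ 0 := div_ne_zero hG.2.1 hG.1
    have ht : TT p ≠ 0 := div_ne_zero hG.2.2 hG.1
    rcases hs.lt_or_gt with h1 | h1 <;> rcases ht.lt_or_gt with h2 | h2 <;> tauto
  · tauto

lemma Gcnull : ν3 G3ᶜ = 0 := by
  have hsub : G3ᶜ ⊆ {p : P3 | dt p.1 p.2.1 = 0} ∪ {p : P3 | dt p.2.2 p.2.1 = 0} ∪
      {p : P3 | dt p.1 p.2.2 = 0} := by
    intro p hp
    simp only [G3, mem_compl_iff, mem_setOf_eq, not_and_or, not_not] at hp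
    simp only [mem_union, mem_setOf_eq]
    tauto
  exact measure_mono_null hsub
    (measure_union_null (measure_union_null Z1null Z2null) Z3null)

lemma G3_one : ν3 G3 = 1 := by
  have h2 : (1:ENNReal) ≤ ν3 G3 := by
    calc (1:ENNReal) = ν3 (G3 ∪ G3ᶜ) := by rw [union_compl_self, measure_univ]
    _ ≤ ν3 G3 + ν3 G3ᶜ := measure_union_le _ _
    _ = ν3 G3 := by rw [Gcnull, add_zero]
  exact le_antisymm prob_le_one h2

lemma A1_quarter : ν3 A1 = 1/4 := by
  have hd12 : Disjoint A1 A2 := by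
    rw [Set.disjoint_left]; rintro p ⟨_, h1, _⟩ ⟨_, h2, _⟩; linarith
  have hd123 : Disjoint (A1 ∪ A2) A3 := by
    rw [Set.disjoint_left]; rintro p (⟨_, _, h1⟩ | ⟨_, _, h1⟩) ⟨_, _, h2⟩ <;> linarith
  have hd1234 : Disjoint (A1 ∪ A2 ∪ A3) A4 := by
    rw [Set.disjoint_left]
    rintro p ((⟨_, h1, _⟩ | ⟨_, _, h1⟩) | ⟨_, h1, _⟩) ⟨_, h2, h3⟩ <;> linarith
  have hsum : ν3 A1 + ν3 A2 + ν3 A3 + ν3 A4 = 1 := by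
    rw [← measure_union hd12 hA2, ← measure_union hd123 hA3, ← measure_union hd1234 hA4,
      ← G3_union, G3_one]
  have h4 : 4 * ν3 A1 = 1 := by
    rw [eqA2, eqA3, eqA4] at hsum
    rw [← hsum]; ring
  rw [(ENNReal.eq_div_iff (by norm_num) (by norm_num) : ν3 A1 = 1/4 ↔ 4 * ν3 A1 = 1)]
  exact h4


lemma main_aux :
    ν3 {p : P3 | (0 : E2) ∈ convexHull ℝ {p.1, p.2.1, p.2.2}} = 1/4 := by
  set Event : Set P3 := {p : P3 | (0 : E2) ∈ convexHull ℝ {p.1, p.2.1, p.2.2}} with hEv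
  have hEG : Event ∩ G3 = A1 := by
    ext p
    simp only [hEv, A1, G3, SS, TT, mem_inter_iff, mem_setOf_eq]
    constructor
    · rintro ⟨hE, hG⟩; exact ⟨hG, (captures_iff hG.1 hG.2.1 hG.2.2).1 hE⟩
    · rintro ⟨hG, hc⟩; exact ⟨(captures_iff hG.1 hG.2.1 hG.2.2).2 hc, hG⟩
  have hle : ν3 Event ≤ ν3 A1 := by
    calc ν3 Event ≤ ν3 ((Event ∩ G3) ∪ G3ᶜ) := by
          refine measure_mono fun p hp => ?_
          by_cases h : p ∈ G3
          · exact Or.inl ⟨hp, h⟩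
          · exact Or.inr h
    _ ≤ ν3 (Event ∩ G3) + ν3 G3ᶜ := measure_union_le _ _
    _ = ν3 A1 := by rw [hEG, Gcnull, add_zero]
  have hge : ν3 A1 ≤ ν3 Event := hEG ▸ measure_mono inter_subset_left
  rw [le_antisymm hle hge]
  exact A1_quarter

end CaptureAux

theorem capture_origin_prob :
    (stdGaussian2.prod (stdGaussian2.prod stdGaussian2))
      {p : EuclideanSpace ℝ (Fin 2) × EuclideanSpace ℝ (Fin 2) × EuclideanSpace ℝ (Fin 2) |
        (0 : EuclideanSpace ℝ (Fin 2)) ∈ convexHull ℝ {p.1, p.2.1, p.2.2}} = 1/4 :=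
  CaptureAux.main_aux
end

section
/- Let a, b, x be independent standard normal random variables on ℝ. Then the median of the three values has variance 1 - √3/π; equivalently, 6·(2π)^{-3/2} ∫_ℝ ∫_ℝ ∫_{a<x<b} x² exp(-(a²+b²+x²)/2) dx db da = 1 - √3/π. -/
open Real MeasureTheory ProbabilityTheory Filter Set Topology
open scoped ENNReal

noncomputable def med (a b x : ℝ) : ℝ := a + b + x - max a (max b x) - min a (min b x)

noncomputable def μ3 : Measure (ℝ × ℝ × ℝ) :=
  (gaussianReal 0 1).prod ((gaussianReal 0 1).prod (gaussianReal 0 1))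

noncomputable def gpdf : ℝ → ℝ := gaussianPDFReal 0 1

noncomputable def gcdf (x : ℝ) : ℝ := ∫ t in Set.Iic x, gpdf t

lemma gpdf_eq (x : ℝ) : gpdf x = (Real.sqrt (2*π))⁻¹ * rexp (-x^2/2) := by
  simp [gpdf, gaussianPDFReal]

lemma gpdf_nonneg (x : ℝ) : 0 ≤ gpdf x := gaussianPDFReal_nonneg 0 1 x

lemma cont_gpdf : Continuous gpdf := by
  have : gpdf = fun x => (Real.sqrt (2*π))⁻¹ * rexp (-x^2/2) := funext gpdf_eq
  rw [this]; fun_prop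

lemma integrable_gpdf : Integrable gpdf := integrable_gaussianPDFReal 0 1

lemma integral_gpdf : ∫ x, gpdf x = 1 := integral_gaussianPDFReal_eq_one 0 one_ne_zero

lemma gpdf_even (x : ℝ) : gpdf (-x) = gpdf x := by
  rw [gpdf_eq, gpdf_eq, neg_sq]

lemma gpdf_sq (x : ℝ) : gpdf x * gpdf x = (2*π)⁻¹ * rexp (-x^2) := by
  rw [gpdf_eq]
  rw [show ((Real.sqrt (2*π))⁻¹ * rexp (-x^2/2)) * ((Real.sqrt (2*π))⁻¹ * rexp (-x^2/2))
      = (Real.sqrt (2*π) * Real.sqrt (2*π))⁻¹ * (rexp (-x^2/2) * rexp (-x^2/2)) by ring]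
  rw [Real.mul_self_sqrt (by positivity), ← Real.exp_add]
  ring_nf

lemma hasDerivAt_gpdf (x : ℝ) : HasDerivAt gpdf (-x * gpdf x) x := by
  have h : HasDerivAt (fun y : ℝ => -y^2/2) (-x) x := by
    have := (hasDerivAt_pow 2 x).neg.div_const 2
    exact this.congr_deriv (by simp; ring)
  have h2 := (h.exp).const_mul (Real.sqrt (2*π))⁻¹
  have e : gpdf = fun y => (Real.sqrt (2*π))⁻¹ * rexp (-y^2/2) := funext gpdf_eq
  rw [e]
  exact h2.congr_deriv (by beta_reduce; ring)

lemma integrable_sq_gpdf : Integrable (fun x : ℝ => x^2 * gpdf x) := by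
  have h := (integrable_rpow_mul_exp_neg_mul_sq (b := 1/2) (by norm_num) (s := 2)
    (by norm_num)).const_mul (Real.sqrt (2*π))⁻¹
  apply h.congr
  filter_upwards with x
  rw [gpdf_eq, show ((2:ℝ)) = ((2:ℕ):ℝ) by norm_num, Real.rpow_natCast]
  ring_nf

lemma gcdf_nonneg (x : ℝ) : 0 ≤ gcdf x :=
  setIntegral_nonneg measurableSet_Iic (fun t _ => gpdf_nonneg t)

lemma gcdf_le_one (x : ℝ) : gcdf x ≤ 1 := by
  rw [← integral_gpdf]
  exact setIntegral_le_integral integrable_gpdf (ae_of_all _ gpdf_nonneg)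

lemma gcdf_eq (x : ℝ) : gcdf x = gcdf 0 + ∫ t in (0:ℝ)..x, gpdf t := by
  have := intervalIntegral.integral_Iic_sub_Iic (μ := volume) (f := gpdf) (a := 0) (b := x)
    integrable_gpdf.integrableOn integrable_gpdf.integrableOn
  unfold gcdf
  linarith

lemma hasDerivAt_gcdf (x : ℝ) : HasDerivAt gcdf (gpdf x) x := by
  have h : HasDerivAt (fun u => ∫ t in (0:ℝ)..u, gpdf t) (gpdf x) x :=
    intervalIntegral.integral_hasDerivAt_right (integrable_gpdf.intervalIntegrable)
      (cont_gpdf.stronglyMeasurable.stronglyMeasurableAtFilter) cont_gpdf.continuousAt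
  have h2 := h.const_add (gcdf 0)
  have e : gcdf = fun u => gcdf 0 + ∫ t in (0:ℝ)..u, gpdf t := funext gcdf_eq
  rw [e]
  exact h2

lemma cont_gcdf : Continuous gcdf :=
  continuous_iff_continuousAt.2 fun x => (hasDerivAt_gcdf x).continuousAt

lemma tendsto_gcdf_atTop : Tendsto gcdf atTop (𝓝 1) := by
  have h := (aecover_Iic (μ := volume) (l := atTop) (b := fun x : ℝ => x)
    tendsto_id).integral_tendsto_of_countably_generated integrable_gpdf
  rwa [integral_gpdf] at h

lemma gcdf_neg (x : ℝ) : gcdf (-x) = 1 - gcdf x := by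
  have h1 : ∫ t in Set.Iic x, gpdf (-t) = ∫ t in Set.Ioi (-x), gpdf t :=
    integral_comp_neg_Iic x gpdf
  have h2 : gcdf x = ∫ t in Set.Ioi (-x), gpdf t := by
    rw [← h1]; unfold gcdf
    exact setIntegral_congr_fun measurableSet_Iic (fun t _ => (gpdf_even t).symm)
  have h3 : gcdf (-x) + ∫ t in Set.Ioi (-x), gpdf t = 1 := by
    rw [← integral_gpdf]
    have := setIntegral_union (μ := volume) (f := gpdf)
      (Iic_disjoint_Ioi (le_refl (-x))) measurableSet_Ioi
      integrable_gpdf.integrableOn integrable_gpdf.integrableOn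
    rw [Iic_union_Ioi, setIntegral_univ] at this
    unfold gcdf
    linarith
  linarith

lemma tendsto_gcdf_atBot : Tendsto gcdf atBot (𝓝 0) := by
  have h : Tendsto (fun x => gcdf (-x)) atTop (𝓝 0) := by
    have : (fun x => gcdf (-x)) = fun x => 1 - gcdf x := funext gcdf_neg
    rw [this]
    have := tendsto_gcdf_atTop.const_sub 1
    simpa using this
  have := h.comp (tendsto_neg_atBot_atTop)
  simpa only [Function.comp_def, neg_neg] using this

lemma tendsto_mul_gpdf_atTop : Tendsto (fun x => x * gpdf x) atTop (𝓝 0) := by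
  have h0 := rpow_mul_exp_neg_mul_sq_isLittleO_exp_neg (b := 1/2) (by norm_num) 1
  have hg : Tendsto (fun x : ℝ => rexp (-(1/2) * x)) atTop (𝓝 0) := by
    apply Real.tendsto_exp_atBot.comp
    apply Tendsto.const_mul_atTop_of_neg (by norm_num) tendsto_id
  have h := h0.isBigO.trans_tendsto hg
  have hc := h.const_mul (Real.sqrt (2*π))⁻¹
  rw [mul_zero] at hc
  apply hc.congr'
  filter_upwards [eventually_gt_atTop (0:ℝ)] with x _
  rw [gpdf_eq, show ((1:ℝ)) = ((1:ℕ):ℝ) by norm_num, Real.rpow_natCast]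
  ring_nf

lemma tendsto_mul_gpdf_atBot : Tendsto (fun x => x * gpdf x) atBot (𝓝 0) := by
  have h := (tendsto_mul_gpdf_atTop.comp tendsto_neg_atBot_atTop).neg
  rw [neg_zero] at h
  apply h.congr
  intro x
  simp [Function.comp, gpdf_even]

lemma tendsto_exp_negsq_atTop : Tendsto (fun x : ℝ => rexp (-x^2)) atTop (𝓝 0) := by
  apply Real.tendsto_exp_atBot.comp
  have : Tendsto (fun x : ℝ => x^2) atTop atTop := tendsto_pow_atTop (by norm_num)
  exact (tendsto_neg_atBot_iff.mpr this)

lemma tendsto_exp_negsq_atBot : Tendsto (fun x : ℝ => rexp (-x^2)) atBot (𝓝 0) := by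
  have h := tendsto_exp_negsq_atTop.comp tendsto_neg_atBot_atTop
  apply h.congr
  intro x; simp [Function.comp]

lemma integral_sq_gpdf : ∫ x, x^2 * gpdf x = 1 := by
  have hd : ∀ x, HasDerivAt (fun y => gcdf y - y * gpdf y) (x^2 * gpdf x) x := by
    intro x
    have := (hasDerivAt_gcdf x).sub ((hasDerivAt_id x).mul (hasDerivAt_gpdf x))
    exact this.congr_deriv (by simp only [id]; ring)
  have hb : Tendsto (fun y => gcdf y - y * gpdf y) atBot (𝓝 0) := by
    have := tendsto_gcdf_atBot.sub tendsto_mul_gpdf_atBot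
    simpa using this
  have ht : Tendsto (fun y => gcdf y - y * gpdf y) atTop (𝓝 1) := by
    have := tendsto_gcdf_atTop.sub tendsto_mul_gpdf_atTop
    simpa using this
  have := integral_of_hasDerivAt_of_tendsto hd integrable_sq_gpdf hb ht
  simpa using this

lemma integrable_sq_gpdf_gcdf : Integrable (fun x : ℝ => x^2 * gpdf x * gcdf x) := by
  apply integrable_sq_gpdf.mono'
  · exact (((continuous_id.pow 2).mul cont_gpdf).mul cont_gcdf).aestronglyMeasurable
  · filter_upwards with x
    have ht : (0:ℝ) ≤ x^2 * gpdf x := mul_nonneg (sq_nonneg x) (gpdf_nonneg x)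
    rw [Real.norm_eq_abs, abs_mul, abs_of_nonneg ht, abs_of_nonneg (gcdf_nonneg x)]
    nlinarith [mul_nonneg ht (sub_nonneg.2 (gcdf_le_one x))]

lemma integrable_sq_gpdf_gcdf_sq : Integrable (fun x : ℝ => x^2 * gpdf x * (gcdf x)^2) := by
  apply integrable_sq_gpdf.mono'
  · exact (((continuous_id.pow 2).mul cont_gpdf).mul (cont_gcdf.pow 2)).aestronglyMeasurable
  · filter_upwards with x
    have ht : (0:ℝ) ≤ x^2 * gpdf x := mul_nonneg (sq_nonneg x) (gpdf_nonneg x)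
    have hc2 : (gcdf x)^2 ≤ 1 := by nlinarith [gcdf_nonneg x, gcdf_le_one x]
    rw [Real.norm_eq_abs, abs_mul, abs_of_nonneg ht, abs_of_nonneg (sq_nonneg (gcdf x))]
    nlinarith [mul_nonneg ht (sub_nonneg.2 hc2)]

lemma integral_sq_gpdf_gcdf : ∫ x, x^2 * gpdf x * gcdf x = 1/2 := by
  have hneg : ∫ x, x^2 * gpdf x * gcdf x = ∫ x, x^2 * gpdf x * (1 - gcdf x) := by
    have hmp := (Measure.measurePreserving_neg (volume : Measure ℝ)).integral_comp
      (Homeomorph.neg ℝ).measurableEmbedding (fun x => x^2 * gpdf x * gcdf x)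
    rw [← hmp]
    congr 1
    funext x
    show (-x)^2 * gpdf (-x) * gcdf (-x) = _
    rw [neg_sq, gpdf_even, gcdf_neg]
  have hsub : ∫ x, x^2 * gpdf x * (1 - gcdf x) = (∫ x, x^2 * gpdf x) - ∫ x, x^2 * gpdf x * gcdf x := by
    rw [← integral_sub integrable_sq_gpdf integrable_sq_gpdf_gcdf]
    congr 1; funext x; ring
  rw [integral_sq_gpdf] at hsub
  rw [hsub] at hneg
  linarith

lemma integrable_exp_negsq_gpdf :
    Integrable (fun x : ℝ => (2*π)⁻¹ * rexp (-x^2) * gpdf x) := by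
  have h := (integrable_exp_neg_mul_sq (b := 3/2) (by norm_num)).const_mul
    ((2*π)⁻¹ * (Real.sqrt (2*π))⁻¹)
  apply h.congr
  filter_upwards with x
  rw [gpdf_eq, show (-(3/2) * x^2 : ℝ) = (-x^2) + (-x^2/2) by ring, Real.exp_add]
  ring

lemma integral_exp_negsq_gpdf :
    ∫ x, (2*π)⁻¹ * rexp (-x^2) * gpdf x = Real.sqrt 3 / (6*π) := by
  have he : ∀ x : ℝ, (2*π)⁻¹ * rexp (-x^2) * gpdf x
      = ((2*π)⁻¹ * (Real.sqrt (2*π))⁻¹) * rexp (-(3/2) * x^2) := by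
    intro x
    rw [gpdf_eq, show (-(3/2) * x^2 : ℝ) = (-x^2) + (-x^2/2) by ring, Real.exp_add]
    ring
  rw [funext he, integral_const_mul, integral_gaussian]
  have h1 : Real.sqrt (π / (3/2)) = Real.sqrt (2*π) / Real.sqrt 3 := by
    rw [show (π / (3/2) : ℝ) = (2*π)/3 by ring, Real.sqrt_div (by positivity)]
  rw [h1]
  have h2 : Real.sqrt (2*π) ≠ 0 := by positivity
  have h3 : Real.sqrt 3 ≠ 0 := by positivity
  have h4 : Real.sqrt 3 * Real.sqrt 3 = 3 := Real.mul_self_sqrt (by norm_num)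
  have hπ : π ≠ 0 := Real.pi_ne_zero
  field_simp
  ring_nf
  rw [Real.sq_sqrt (by norm_num : (0:ℝ) ≤ 3)]
  ring

lemma hasDerivAt_JF (x : ℝ) :
    HasDerivAt (fun y => (gcdf y)^3/3 - y * gpdf y * (gcdf y)^2
        - (2*π)⁻¹ * rexp (-y^2) * gcdf y)
      (x^2 * gpdf x * (gcdf x)^2 - (2*π)⁻¹ * rexp (-x^2) * gpdf x) x := by
  have hΦ := hasDerivAt_gcdf x
  have hφ := hasDerivAt_gpdf x
  have hexp : HasDerivAt (fun y : ℝ => rexp (-y^2)) (rexp (-x^2) * (-(2*x))) x := by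
    have h := ((hasDerivAt_pow 2 x).neg).exp
    convert h using 1
    · rfl
    · simp
  have d1 := (hΦ.pow 3).div_const 3
  have d2 := ((hasDerivAt_id x).mul hφ).mul (hΦ.pow 2)
  have d3 := (hexp.const_mul ((2*π:ℝ))⁻¹).mul hΦ
  have hall := (d1.sub d2).sub d3
  refine hall.congr_deriv ?_
  simp only [id_eq, Pi.mul_apply, Pi.pow_apply]
  push_cast
  linear_combination (-(2*x*gcdf x)) * gpdf_sq x

lemma tendsto_JF_atTop :
    Tendsto (fun y => (gcdf y)^3/3 - y * gpdf y * (gcdf y)^2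
        - (2*π)⁻¹ * rexp (-y^2) * gcdf y) atTop (𝓝 (1/3)) := by
  have t1 : Tendsto (fun y => (gcdf y)^3/3) atTop (𝓝 (1/3)) := by
    have := (tendsto_gcdf_atTop.pow 3).div_const 3
    simpa using this
  have t2 : Tendsto (fun y => y * gpdf y * (gcdf y)^2) atTop (𝓝 0) := by
    have hbnd : ∀ y : ℝ, ‖y * gpdf y * (gcdf y)^2‖ ≤ |y * gpdf y| := by
      intro y
      rw [Real.norm_eq_abs, abs_mul, abs_of_nonneg (sq_nonneg (gcdf y))]
      have h1 : (gcdf y)^2 ≤ 1 := by nlinarith [gcdf_nonneg y, gcdf_le_one y]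
      nlinarith [abs_nonneg (y * gpdf y), sq_nonneg (gcdf y),
        mul_nonneg (abs_nonneg (y * gpdf y)) (sub_nonneg.2 h1)]
    have htd : Tendsto (fun y => |y * gpdf y|) atTop (𝓝 0) := by
      have := tendsto_mul_gpdf_atTop.abs
      simpa using this
    exact squeeze_zero_norm hbnd htd
  have t3 : Tendsto (fun y => (2*π)⁻¹ * rexp (-y^2) * gcdf y) atTop (𝓝 0) := by
    have hbnd : ∀ y : ℝ, ‖(2*π)⁻¹ * rexp (-y^2) * gcdf y‖ ≤ (2*π)⁻¹ * rexp (-y^2) := by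
      intro y
      rw [Real.norm_eq_abs, abs_mul, abs_of_nonneg (by positivity : (0:ℝ) ≤ (2*π)⁻¹ * rexp (-y^2)),
        abs_of_nonneg (gcdf_nonneg y)]
      nlinarith [gcdf_le_one y, gcdf_nonneg y, Real.exp_pos (-y^2), Real.pi_pos,
        mul_nonneg (by positivity : (0:ℝ) ≤ (2*π)⁻¹ * rexp (-y^2)) (sub_nonneg.2 (gcdf_le_one y))]
    have htd : Tendsto (fun y : ℝ => (2*π)⁻¹ * rexp (-y^2)) atTop (𝓝 0) := by
      have := tendsto_exp_negsq_atTop.const_mul ((2*π:ℝ))⁻¹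
      simpa using this
    exact squeeze_zero_norm hbnd htd
  have := (t1.sub t2).sub t3
  simpa using this

lemma tendsto_JF_atBot :
    Tendsto (fun y => (gcdf y)^3/3 - y * gpdf y * (gcdf y)^2
        - (2*π)⁻¹ * rexp (-y^2) * gcdf y) atBot (𝓝 0) := by
  have t1 : Tendsto (fun y => (gcdf y)^3/3) atBot (𝓝 0) := by
    have := (tendsto_gcdf_atBot.pow 3).div_const 3
    simpa using this
  have t2 : Tendsto (fun y => y * gpdf y * (gcdf y)^2) atBot (𝓝 0) := by
    have hbnd : ∀ y : ℝ, ‖y * gpdf y * (gcdf y)^2‖ ≤ |y * gpdf y| := by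
      intro y
      rw [Real.norm_eq_abs, abs_mul, abs_of_nonneg (sq_nonneg (gcdf y))]
      have h1 : (gcdf y)^2 ≤ 1 := by nlinarith [gcdf_nonneg y, gcdf_le_one y]
      nlinarith [abs_nonneg (y * gpdf y), sq_nonneg (gcdf y),
        mul_nonneg (abs_nonneg (y * gpdf y)) (sub_nonneg.2 h1)]
    have htd : Tendsto (fun y => |y * gpdf y|) atBot (𝓝 0) := by
      have := tendsto_mul_gpdf_atBot.abs
      simpa using this
    exact squeeze_zero_norm hbnd htd
  have t3 : Tendsto (fun y => (2*π)⁻¹ * rexp (-y^2) * gcdf y) atBot (𝓝 0) := by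
    have hbnd : ∀ y : ℝ, ‖(2*π)⁻¹ * rexp (-y^2) * gcdf y‖ ≤ (2*π)⁻¹ * rexp (-y^2) := by
      intro y
      rw [Real.norm_eq_abs, abs_mul, abs_of_nonneg (by positivity : (0:ℝ) ≤ (2*π)⁻¹ * rexp (-y^2)),
        abs_of_nonneg (gcdf_nonneg y)]
      nlinarith [gcdf_le_one y, gcdf_nonneg y, Real.exp_pos (-y^2), Real.pi_pos,
        mul_nonneg (by positivity : (0:ℝ) ≤ (2*π)⁻¹ * rexp (-y^2)) (sub_nonneg.2 (gcdf_le_one y))]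
    have htd : Tendsto (fun y : ℝ => (2*π)⁻¹ * rexp (-y^2)) atBot (𝓝 0) := by
      have := tendsto_exp_negsq_atBot.const_mul ((2*π:ℝ))⁻¹
      simpa using this
    exact squeeze_zero_norm hbnd htd
  have := (t1.sub t2).sub t3
  simpa using this

lemma integral_sq_gpdf_gcdf_sq :
    ∫ x, x^2 * gpdf x * (gcdf x)^2 = 1/3 + Real.sqrt 3 / (6*π) := by
  have hint : Integrable
      (fun x => x^2 * gpdf x * (gcdf x)^2 - (2*π)⁻¹ * rexp (-x^2) * gpdf x) :=
    integrable_sq_gpdf_gcdf_sq.sub integrable_exp_negsq_gpdf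
  have hFTC := integral_of_hasDerivAt_of_tendsto hasDerivAt_JF hint
    tendsto_JF_atBot tendsto_JF_atTop
  rw [integral_sub integrable_sq_gpdf_gcdf_sq integrable_exp_negsq_gpdf,
    integral_exp_negsq_gpdf] at hFTC
  linarith

lemma integrable_Ifun : Integrable (fun x : ℝ => x^2 * gpdf x * (gcdf x * (1 - gcdf x))) := by
  have : (fun x : ℝ => x^2 * gpdf x * (gcdf x * (1 - gcdf x)))
      = fun x => x^2 * gpdf x * gcdf x - x^2 * gpdf x * (gcdf x)^2 := by
    funext x; ring
  rw [this]
  exact integrable_sq_gpdf_gcdf.sub integrable_sq_gpdf_gcdf_sq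

lemma integral_Ifun :
    ∫ x, x^2 * gpdf x * (gcdf x * (1 - gcdf x)) = 1/6 - Real.sqrt 3 / (6*π) := by
  have : (fun x : ℝ => x^2 * gpdf x * (gcdf x * (1 - gcdf x)))
      = fun x => x^2 * gpdf x * gcdf x - x^2 * gpdf x * (gcdf x)^2 := by
    funext x; ring
  rw [this, integral_sub integrable_sq_gpdf_gcdf integrable_sq_gpdf_gcdf_sq,
    integral_sq_gpdf_gcdf, integral_sq_gpdf_gcdf_sq]
  ring


noncomputable def ψ (x : ℝ) : ℝ≥0∞ := ENNReal.ofReal (gpdf x)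

lemma meas_ψ : Measurable ψ := (measurable_gaussianPDFReal 0 1).ennreal_ofReal

lemma gauss_eq_withDensity : gaussianReal 0 1 = volume.withDensity ψ :=
  gaussianReal_of_var_ne_zero 0 one_ne_zero

lemma lintegral_gauss (f : ℝ → ℝ≥0∞) (hf : Measurable f) :
    ∫⁻ x, f x ∂(gaussianReal 0 1) = ∫⁻ x, ψ x * f x := by
  rw [gauss_eq_withDensity, lintegral_withDensity_eq_lintegral_mul _ meas_ψ hf]
  rfl

noncomputable def chlt (a x : ℝ) : ℝ≥0∞ :=
  Set.indicator {q : ℝ × ℝ | q.1 < q.2} (fun _ => 1) (a, x)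

lemma chlt_eq (a x : ℝ) : chlt a x = if a < x then 1 else 0 := by
  unfold chlt
  rw [Set.indicator_apply]
  rfl

lemma meas_chlt : Measurable (fun q : ℝ × ℝ => chlt q.1 q.2) := by
  unfold chlt
  exact (measurable_const.indicator (measurableSet_lt measurable_fst measurable_snd))

lemma lint_gauss_chlt_right (a : ℝ) :
    ∫⁻ x, chlt a x ∂(gaussianReal 0 1) = ENNReal.ofReal (1 - gcdf a) := by
  rw [lintegral_gauss (fun x => chlt a x)
    (meas_chlt.comp (measurable_const.prodMk measurable_id))]
  have h1 : ∀ x, ψ x * chlt a x = (Set.Ioi a).indicator ψ x := by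
    intro x
    rw [chlt_eq, Set.indicator_apply]
    by_cases h : a < x
    · simp [h, Set.mem_Ioi]
    · simp [h, Set.mem_Ioi]
  simp_rw [h1]
  rw [lintegral_indicator measurableSet_Ioi]
  have h2 : ∫ t in Set.Ioi a, gpdf t = 1 - gcdf a := by
    have := setIntegral_union (μ := volume) (f := gpdf)
      (Iic_disjoint_Ioi (le_refl a)) measurableSet_Ioi
      integrable_gpdf.integrableOn integrable_gpdf.integrableOn
    rw [Iic_union_Ioi, setIntegral_univ, integral_gpdf] at this
    unfold gcdf
    linarith
  rw [← h2]
  exact (ofReal_integral_eq_lintegral_ofReal integrable_gpdf.integrableOn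
    (ae_of_all _ fun t => gpdf_nonneg t)).symm

lemma lint_gauss_chlt_left (x : ℝ) :
    ∫⁻ a, chlt a x ∂(gaussianReal 0 1) = ENNReal.ofReal (gcdf x) := by
  rw [lintegral_gauss (fun a => chlt a x)
    (meas_chlt.comp (measurable_id.prodMk measurable_const))]
  have h1 : ∀ a, ψ a * chlt a x = (Set.Iio x).indicator ψ a := by
    intro a
    rw [chlt_eq, Set.indicator_apply]
    by_cases h : a < x
    · simp [h, Set.mem_Iio]
    · simp [h, Set.mem_Iio]
  simp_rw [h1]
  rw [lintegral_indicator measurableSet_Iio]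
  have h2 : ∫ t in Set.Iio x, gpdf t = gcdf x := (integral_Iic_eq_integral_Iio).symm
  rw [← h2]
  exact (ofReal_integral_eq_lintegral_ofReal integrable_gpdf.integrableOn
    (ae_of_all _ fun t => gpdf_nonneg t)).symm

lemma iter3 (G : ℝ → ℝ → ℝ → ℝ≥0∞)
    (hG : Measurable (fun p : ℝ × ℝ × ℝ => G p.1 p.2.1 p.2.2)) :
    ∫⁻ p : ℝ × ℝ × ℝ, G p.1 p.2.1 p.2.2 ∂μ3
      = ∫⁻ a, ∫⁻ b, ∫⁻ x, G a b x ∂(gaussianReal 0 1) ∂(gaussianReal 0 1)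
          ∂(gaussianReal 0 1) := by
  unfold μ3
  rw [lintegral_prod _ hG.aemeasurable]
  congr 1
  funext a
  exact lintegral_prod _ ((hG.comp measurable_prodMk_left).aemeasurable)

lemma inv12 (G : ℝ → ℝ → ℝ → ℝ≥0∞)
    (hG : Measurable (fun p : ℝ × ℝ × ℝ => G p.1 p.2.1 p.2.2)) :
    ∫⁻ p : ℝ × ℝ × ℝ, G p.2.1 p.1 p.2.2 ∂μ3 = ∫⁻ p : ℝ × ℝ × ℝ, G p.1 p.2.1 p.2.2 ∂μ3 := by
  have hG' : Measurable (fun p : ℝ × ℝ × ℝ => G p.2.1 p.1 p.2.2) := by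
    exact hG.comp ((measurable_fst.comp measurable_snd).prodMk
      (measurable_fst.prodMk (measurable_snd.comp measurable_snd)))
  rw [iter3 (fun a b x => G b a x) hG', iter3 G hG]
  have hmeas : AEMeasurable (Function.uncurry fun a b => ∫⁻ x, G b a x ∂(gaussianReal 0 1))
      ((gaussianReal 0 1).prod (gaussianReal 0 1)) := by
    have hm2 : Measurable (fun r : (ℝ × ℝ) × ℝ => G r.1.2 r.1.1 r.2) :=
      hG.comp ((measurable_snd.comp measurable_fst).prodMk
        ((measurable_fst.comp measurable_fst).prodMk measurable_snd))
    exact (Measurable.lintegral_prod_right' hm2).aemeasurable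
  exact lintegral_lintegral_swap hmeas

lemma inv23 (G : ℝ → ℝ → ℝ → ℝ≥0∞)
    (hG : Measurable (fun p : ℝ × ℝ × ℝ => G p.1 p.2.1 p.2.2)) :
    ∫⁻ p : ℝ × ℝ × ℝ, G p.1 p.2.2 p.2.1 ∂μ3 = ∫⁻ p : ℝ × ℝ × ℝ, G p.1 p.2.1 p.2.2 ∂μ3 := by
  have hG' : Measurable (fun p : ℝ × ℝ × ℝ => G p.1 p.2.2 p.2.1) := by
    exact hG.comp (measurable_fst.prodMk
      ((measurable_snd.comp measurable_snd).prodMk (measurable_fst.comp measurable_snd)))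
  rw [iter3 (fun a b x => G a x b) hG', iter3 G hG]
  congr 1
  funext a
  have hmeas : AEMeasurable (Function.uncurry fun b x => G a x b)
      ((gaussianReal 0 1).prod (gaussianReal 0 1)) := by
    apply Measurable.aemeasurable
    exact (hG.comp (measurable_const.prodMk
      (measurable_snd.prodMk measurable_fst)))
  exact lintegral_lintegral_swap hmeas

noncomputable def Cfn (m l h : ℝ) : ℝ≥0∞ := ENNReal.ofReal (m^2) * chlt l m * chlt m h

lemma meas_Cfn_comp {f g h : ℝ × ℝ × ℝ → ℝ} (hf : Measurable f) (hg : Measurable g)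
    (hh : Measurable h) : Measurable (fun p => Cfn (f p) (g p) (h p)) := by
  unfold Cfn
  apply Measurable.mul
  apply Measurable.mul
  · exact ((hf.pow_const 2).ennreal_ofReal)
  · exact meas_chlt.comp (hg.prodMk hf)
  · exact meas_chlt.comp (hf.prodMk hh)

lemma meas_fst : Measurable (fun p : ℝ × ℝ × ℝ => p.1) := measurable_fst
lemma meas_snd1 : Measurable (fun p : ℝ × ℝ × ℝ => p.2.1) := measurable_fst.comp measurable_snd
lemma meas_snd2 : Measurable (fun p : ℝ × ℝ × ℝ => p.2.2) := measurable_snd.comp measurable_snd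

lemma canon :
    ∫⁻ p : ℝ × ℝ × ℝ, Cfn p.1 p.2.1 p.2.2 ∂μ3
      = ENNReal.ofReal (1/6 - Real.sqrt 3 / (6*π)) := by
  rw [iter3 Cfn (meas_Cfn_comp meas_fst meas_snd1 meas_snd2)]
  have step1 : ∀ a b : ℝ, ∫⁻ x, Cfn a b x ∂(gaussianReal 0 1)
      = ENNReal.ofReal (a^2) * chlt b a * ENNReal.ofReal (1 - gcdf a) := by
    intro a b
    unfold Cfn
    have hm : Measurable (fun x => chlt a x) :=
      meas_chlt.comp (measurable_const.prodMk measurable_id)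
    rw [lintegral_const_mul _ hm, lint_gauss_chlt_right a]
  have step2 : ∀ a : ℝ, ∫⁻ b, ENNReal.ofReal (a^2) * chlt b a * ENNReal.ofReal (1 - gcdf a)
        ∂(gaussianReal 0 1)
      = ENNReal.ofReal (a^2) * ENNReal.ofReal (gcdf a) * ENNReal.ofReal (1 - gcdf a) := by
    intro a
    have hmb : Measurable (fun b => chlt b a) :=
      meas_chlt.comp (measurable_id.prodMk measurable_const)
    calc ∫⁻ b, ENNReal.ofReal (a^2) * chlt b a * ENNReal.ofReal (1 - gcdf a)
          ∂(gaussianReal 0 1)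
        = ∫⁻ b, ENNReal.ofReal (a^2) * ENNReal.ofReal (1 - gcdf a) * chlt b a
          ∂(gaussianReal 0 1) := by congr 1; funext b; ring
      _ = ENNReal.ofReal (a^2) * ENNReal.ofReal (1 - gcdf a)
            * ∫⁻ b, chlt b a ∂(gaussianReal 0 1) := lintegral_const_mul _ hmb
      _ = _ := by rw [lint_gauss_chlt_left a]; ring
  simp_rw [step1, step2]
  have hfin : Measurable (fun a : ℝ =>
      ENNReal.ofReal (a^2) * ENNReal.ofReal (gcdf a) * ENNReal.ofReal (1 - gcdf a)) := by
    apply Measurable.fun_mul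
    apply Measurable.fun_mul
    · exact (measurable_id.pow_const 2).ennreal_ofReal
    · exact cont_gcdf.measurable.ennreal_ofReal
    · exact (measurable_const.sub cont_gcdf.measurable).ennreal_ofReal
  rw [lintegral_gauss _ hfin]
  have heq : ∀ a : ℝ, ψ a * (ENNReal.ofReal (a^2) * ENNReal.ofReal (gcdf a)
        * ENNReal.ofReal (1 - gcdf a))
      = ENNReal.ofReal (a^2 * gpdf a * (gcdf a * (1 - gcdf a))) := by
    intro a
    unfold ψ
    rw [ENNReal.ofReal_mul (mul_nonneg (sq_nonneg a) (gpdf_nonneg a)),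
      ENNReal.ofReal_mul (sq_nonneg a), ENNReal.ofReal_mul (gcdf_nonneg a)]
    ring
  simp_rw [heq]
  rw [← ofReal_integral_eq_lintegral_ofReal integrable_Ifun (ae_of_all _ fun x =>
    mul_nonneg (mul_nonneg (sq_nonneg x) (gpdf_nonneg x))
      (mul_nonneg (gcdf_nonneg x) (by linarith [gcdf_le_one x])))]
  rw [integral_Ifun]


lemma lint_E4 : ∫⁻ p : ℝ × ℝ × ℝ, Cfn p.1 p.2.1 p.2.2 ∂μ3
    = ENNReal.ofReal (1/6 - Real.sqrt 3 / (6*π)) := canon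

lemma lint_E3 : ∫⁻ p : ℝ × ℝ × ℝ, Cfn p.1 p.2.2 p.2.1 ∂μ3
    = ENNReal.ofReal (1/6 - Real.sqrt 3 / (6*π)) := by
  rw [inv23 Cfn (meas_Cfn_comp meas_fst meas_snd1 meas_snd2)]; exact canon

lemma lint_E5 : ∫⁻ p : ℝ × ℝ × ℝ, Cfn p.2.1 p.1 p.2.2 ∂μ3
    = ENNReal.ofReal (1/6 - Real.sqrt 3 / (6*π)) := by
  rw [inv12 Cfn (meas_Cfn_comp meas_fst meas_snd1 meas_snd2)]; exact canon

lemma lint_E6 : ∫⁻ p : ℝ × ℝ × ℝ, Cfn p.2.1 p.2.2 p.1 ∂μ3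
    = ENNReal.ofReal (1/6 - Real.sqrt 3 / (6*π)) := by
  have h := inv12 (fun a b x => Cfn a x b) (meas_Cfn_comp meas_fst meas_snd2 meas_snd1)
  rw [h]; exact lint_E3

lemma lint_E1 : ∫⁻ p : ℝ × ℝ × ℝ, Cfn p.2.2 p.1 p.2.1 ∂μ3
    = ENNReal.ofReal (1/6 - Real.sqrt 3 / (6*π)) := by
  have h := inv23 (fun a b x => Cfn x a b) (meas_Cfn_comp meas_snd2 meas_fst meas_snd1)
  rw [← h]; exact lint_E5

lemma lint_E2 : ∫⁻ p : ℝ × ℝ × ℝ, Cfn p.2.2 p.2.1 p.1 ∂μ3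
    = ENNReal.ofReal (1/6 - Real.sqrt 3 / (6*π)) := by
  have h := inv23 (fun a b x => Cfn x b a) (meas_Cfn_comp meas_snd2 meas_snd1 meas_fst)
  rw [← h]; exact lint_E6

lemma med_sq_decomp (a b x : ℝ) (h1 : a ≠ b) (h2 : a ≠ x) (h3 : b ≠ x) :
    ENNReal.ofReal ((med a b x)^2)
      = Cfn x a b + Cfn x b a + Cfn a x b + Cfn a b x + Cfn b a x + Cfn b x a := by
  unfold Cfn
  rcases lt_trichotomy a b with hab | hab | hab
  · rcases lt_trichotomy x a with hxa | hxa | hxa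
    · -- x < a < b, med = a
      have hmed : med a b x = a := by
        unfold med; rw [max_def, max_def, min_def, min_def]; split_ifs <;> linarith
      simp only [chlt_eq, hmed, if_pos hxa, if_pos hab, if_pos (lt_trans hxa hab),
        if_neg (asymm hxa), if_neg (asymm hab), if_neg (asymm (lt_trans hxa hab)),
        mul_one, mul_zero, zero_mul, one_mul, add_zero, zero_add]
    · exact absurd hxa.symm h2
    · rcases lt_trichotomy x b with hxb | hxb | hxb
      · -- a < x < b, med = x
        have hmed : med a b x = x := by
          unfold med; rw [max_def, max_def, min_def, min_def]; split_ifs <;> linarith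
        simp only [chlt_eq, hmed, if_pos hxa, if_pos hab, if_pos hxb,
          if_neg (asymm hxa), if_neg (asymm hab), if_neg (asymm hxb),
          mul_one, mul_zero, zero_mul, one_mul, add_zero, zero_add]
      · exact absurd hxb h3.symm
      · -- a < b < x, med = b
        have hmed : med a b x = b := by
          unfold med; rw [max_def, max_def, min_def, min_def]; split_ifs <;> linarith
        simp only [chlt_eq, hmed, if_pos hxa, if_pos hab, if_pos hxb,
          if_neg (asymm hxa), if_neg (asymm hab), if_neg (asymm hxb),
          mul_one, mul_zero, zero_mul, one_mul, add_zero, zero_add]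
  · exact absurd hab h1
  · rcases lt_trichotomy x b with hxb | hxb | hxb
    · -- x < b < a, med = b
      have hmed : med a b x = b := by
        unfold med; rw [max_def, max_def, min_def, min_def]; split_ifs <;> linarith
      simp only [chlt_eq, hmed, if_pos hxb, if_pos hab, if_pos (lt_trans hxb hab),
        if_neg (asymm hxb), if_neg (asymm hab), if_neg (asymm (lt_trans hxb hab)),
        mul_one, mul_zero, zero_mul, one_mul, add_zero, zero_add]
    · exact absurd hxb h3.symm
    · rcases lt_trichotomy x a with hxa | hxa | hxa
      · -- b < x < a, med = x
        have hmed : med a b x = x := by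
          unfold med; rw [max_def, max_def, min_def, min_def]; split_ifs <;> linarith
        simp only [chlt_eq, hmed, if_pos hxb, if_pos hab, if_pos hxa,
          if_neg (asymm hxb), if_neg (asymm hab), if_neg (asymm hxa),
          mul_one, mul_zero, zero_mul, one_mul, add_zero, zero_add]
      · exact absurd hxa.symm h2
      · -- b < a < x, med = a
        have hmed : med a b x = a := by
          unfold med; rw [max_def, max_def, min_def, min_def]; split_ifs <;> linarith
        simp only [chlt_eq, hmed, if_pos hxb, if_pos hab, if_pos hxa,
          if_neg (asymm hxb), if_neg (asymm hab), if_neg (asymm hxa),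
          mul_one, mul_zero, zero_mul, one_mul, add_zero, zero_add]

lemma gauss_singleton (a : ℝ) : gaussianReal 0 1 {a} = 0 :=
  gaussianReal_absolutelyContinuous 0 one_ne_zero (measure_singleton a)

lemma ties_null : μ3 {p : ℝ × ℝ × ℝ | p.1 = p.2.1 ∨ p.1 = p.2.2 ∨ p.2.1 = p.2.2} = 0 := by
  have hm1 : MeasurableSet {p : ℝ × ℝ × ℝ | p.1 = p.2.1} :=
    measurableSet_eq_fun meas_fst meas_snd1
  have hm2 : MeasurableSet {p : ℝ × ℝ × ℝ | p.1 = p.2.2} :=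
    measurableSet_eq_fun meas_fst meas_snd2
  have hm3 : MeasurableSet {p : ℝ × ℝ × ℝ | p.2.1 = p.2.2} :=
    measurableSet_eq_fun meas_snd1 meas_snd2
  have key1 : μ3 {p : ℝ × ℝ × ℝ | p.1 = p.2.1} = 0 := by
    unfold μ3
    rw [Measure.prod_apply hm1]
    have : ∀ a : ℝ, (Prod.mk a ⁻¹' {p : ℝ × ℝ × ℝ | p.1 = p.2.1})
        = ({a} : Set ℝ) ×ˢ (univ : Set ℝ) := by
      intro a; ext q; simp [Prod.ext_iff, eq_comm]
    simp_rw [this, Measure.prod_prod, gauss_singleton, zero_mul, lintegral_const, zero_mul]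
  have key2 : μ3 {p : ℝ × ℝ × ℝ | p.1 = p.2.2} = 0 := by
    unfold μ3
    rw [Measure.prod_apply hm2]
    have : ∀ a : ℝ, (Prod.mk a ⁻¹' {p : ℝ × ℝ × ℝ | p.1 = p.2.2})
        = (univ : Set ℝ) ×ˢ ({a} : Set ℝ) := by
      intro a; ext q; simp [Prod.ext_iff, eq_comm]
    simp_rw [this, Measure.prod_prod, gauss_singleton, mul_zero, lintegral_const, zero_mul]
  have key3 : μ3 {p : ℝ × ℝ × ℝ | p.2.1 = p.2.2} = 0 := by
    unfold μ3
    rw [Measure.prod_apply hm3]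
    have hdiag : ((gaussianReal 0 1).prod (gaussianReal 0 1)) {q : ℝ × ℝ | q.1 = q.2} = 0 := by
      rw [Measure.prod_apply (measurableSet_eq_fun measurable_fst measurable_snd)]
      have : ∀ b : ℝ, (Prod.mk b ⁻¹' {q : ℝ × ℝ | q.1 = q.2}) = ({b} : Set ℝ) := by
        intro b; ext t; simp [eq_comm]
      simp_rw [this, gauss_singleton, lintegral_const, zero_mul]
    have : ∀ a : ℝ, (Prod.mk a ⁻¹' {p : ℝ × ℝ × ℝ | p.2.1 = p.2.2})
        = {q : ℝ × ℝ | q.1 = q.2} := by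
      intro a; ext q; simp
    simp_rw [this, hdiag, lintegral_const, zero_mul]
  have hsub : {p : ℝ × ℝ × ℝ | p.1 = p.2.1 ∨ p.1 = p.2.2 ∨ p.2.1 = p.2.2}
      ⊆ {p : ℝ × ℝ × ℝ | p.1 = p.2.1} ∪ ({p : ℝ × ℝ × ℝ | p.1 = p.2.2}
        ∪ {p : ℝ × ℝ × ℝ | p.2.1 = p.2.2}) := by
    intro p hp
    rcases hp with h | h | h
    · exact Or.inl h
    · exact Or.inr (Or.inl h)
    · exact Or.inr (Or.inr h)
  refine le_antisymm ?_ zero_le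
  calc μ3 _ ≤ μ3 ({p : ℝ × ℝ × ℝ | p.1 = p.2.1} ∪ ({p : ℝ × ℝ × ℝ | p.1 = p.2.2}
        ∪ {p : ℝ × ℝ × ℝ | p.2.1 = p.2.2})) := measure_mono hsub
    _ ≤ μ3 {p : ℝ × ℝ × ℝ | p.1 = p.2.1} + (μ3 {p : ℝ × ℝ × ℝ | p.1 = p.2.2}
        + μ3 {p : ℝ × ℝ × ℝ | p.2.1 = p.2.2}) :=
      le_trans (measure_union_le _ _) (by gcongr; exact measure_union_le _ _)
    _ = 0 := by rw [key1, key2, key3]; simp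

lemma cont_med : Continuous (fun p : ℝ × ℝ × ℝ => med p.1 p.2.1 p.2.2) := by
  unfold med
  fun_prop

lemma lint_med_sq :
    ∫⁻ p : ℝ × ℝ × ℝ, ENNReal.ofReal ((med p.1 p.2.1 p.2.2)^2) ∂μ3
      = 6 * ENNReal.ofReal (1/6 - Real.sqrt 3 / (6*π)) := by
  have hae : ∀ᵐ p ∂μ3, ENNReal.ofReal ((med p.1 p.2.1 p.2.2)^2)
      = Cfn p.2.2 p.1 p.2.1 + Cfn p.2.2 p.2.1 p.1 + Cfn p.1 p.2.2 p.2.1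
        + Cfn p.1 p.2.1 p.2.2 + Cfn p.2.1 p.1 p.2.2 + Cfn p.2.1 p.2.2 p.1 := by
    filter_upwards [compl_mem_ae_iff.2 ties_null] with p hp
    simp only [Set.mem_compl_iff, Set.mem_setOf_eq, not_or] at hp
    exact med_sq_decomp p.1 p.2.1 p.2.2 hp.1 hp.2.1 hp.2.2
  rw [lintegral_congr_ae hae]
  have m1 := meas_Cfn_comp meas_snd2 meas_fst meas_snd1
  have m2 := meas_Cfn_comp meas_snd2 meas_snd1 meas_fst
  have m3 := meas_Cfn_comp meas_fst meas_snd2 meas_snd1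
  have m4 := meas_Cfn_comp meas_fst meas_snd1 meas_snd2
  have m5 := meas_Cfn_comp meas_snd1 meas_fst meas_snd2
  have m6 := meas_Cfn_comp meas_snd1 meas_snd2 meas_fst
  rw [lintegral_add_right _ m6, lintegral_add_right _ m5, lintegral_add_right _ m4,
    lintegral_add_right _ m3, lintegral_add_right _ m2]
  rw [lint_E1, lint_E2, lint_E3, lint_E4, lint_E5, lint_E6]
  ring

lemma sqrt3_lt_pi : Real.sqrt 3 < π := by
  have h2 : Real.sqrt 3 < 2 := by
    nlinarith [Real.sq_sqrt (by norm_num : (0:ℝ) ≤ 3), Real.sqrt_nonneg 3]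
  linarith [Real.pi_gt_three]

lemma integral_med_sq : ∫ p : ℝ × ℝ × ℝ, (med p.1 p.2.1 p.2.2)^2 ∂μ3
    = 1 - Real.sqrt 3 / π := by
  rw [integral_eq_lintegral_of_nonneg_ae (ae_of_all _ fun p => sq_nonneg _)
    ((cont_med.pow 2).aestronglyMeasurable)]
  have : ∀ᵐ p ∂μ3, True := ae_of_all _ fun _ => trivial
  rw [show (fun p : ℝ × ℝ × ℝ => ENNReal.ofReal ((fun p : ℝ × ℝ × ℝ =>
    (med p.1 p.2.1 p.2.2)^2) p)) = fun p : ℝ × ℝ × ℝ =>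
    ENNReal.ofReal ((med p.1 p.2.1 p.2.2)^2) from rfl, lint_med_sq]
  rw [show (6 : ℝ≥0∞) = ENNReal.ofReal (6:ℝ) by norm_num,
    ← ENNReal.ofReal_mul (by norm_num : (0:ℝ) ≤ 6), ENNReal.toReal_ofReal]
  · field_simp
  · have := sqrt3_lt_pi
    have hπ := Real.pi_pos
    have h1 : Real.sqrt 3 / (6*π) < 1/6 := by
      rw [div_lt_div_iff₀ (by positivity) (by norm_num)]
      nlinarith
    nlinarith

lemma gauss_map_neg : (gaussianReal 0 1).map (fun x : ℝ => -x) = gaussianReal 0 1 := by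
  have h := gaussianReal_map_const_mul (μ := 0) (v := 1) (-1)
  have he : (fun x : ℝ => (-1 : ℝ) * x) = (fun x : ℝ => -x) := by funext x; ring
  rw [show ((-1 : ℝ) * ·) = (fun x : ℝ => (-1:ℝ) * x) from rfl, he] at h
  rw [h]
  norm_num

lemma map_neg3 : Measure.map (fun p : ℝ × ℝ × ℝ => (-p.1, -p.2.1, -p.2.2)) μ3 = μ3 := by
  have hneg : Measurable (fun x : ℝ => -x) := measurable_neg
  have inner : Measure.map (Prod.map (fun x : ℝ => -x) (fun x : ℝ => -x))
      ((gaussianReal 0 1).prod (gaussianReal 0 1))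
      = (gaussianReal 0 1).prod (gaussianReal 0 1) := by
    rw [← Measure.map_prod_map _ _ hneg hneg, gauss_map_neg]
  have outer := Measure.map_prod_map (f := fun x : ℝ => -x)
    (g := Prod.map (fun x : ℝ => -x) (fun x : ℝ => -x))
    (gaussianReal 0 1) ((gaussianReal 0 1).prod (gaussianReal 0 1)) hneg
    (hneg.prodMap hneg)
  rw [gauss_map_neg, inner] at outer
  have he : (Prod.map (fun x : ℝ => -x) (Prod.map (fun x : ℝ => -x) (fun x : ℝ => -x)))
      = (fun p : ℝ × ℝ × ℝ => (-p.1, -p.2.1, -p.2.2)) := by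
    funext p; rfl
  unfold μ3
  rw [← he, ← outer]

lemma med_neg (a b x : ℝ) : med (-a) (-b) (-x) = - med a b x := by
  unfold med
  rw [max_neg_neg, max_neg_neg, min_neg_neg, min_neg_neg]
  ring

lemma integral_med_mean : ∫ p : ℝ × ℝ × ℝ, med p.1 p.2.1 p.2.2 ∂μ3 = 0 := by
  have hT : Measurable (fun p : ℝ × ℝ × ℝ => (-p.1, -p.2.1, -p.2.2) : ℝ × ℝ × ℝ → ℝ × ℝ × ℝ) :=
    (meas_fst.neg).prodMk ((meas_snd1.neg).prodMk (meas_snd2.neg))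
  have h := integral_map (φ := fun p : ℝ × ℝ × ℝ => (-p.1, -p.2.1, -p.2.2)) (μ := μ3)
    hT.aemeasurable (f := fun p : ℝ × ℝ × ℝ => med p.1 p.2.1 p.2.2)
    (cont_med.aestronglyMeasurable)
  rw [map_neg3] at h
  have hneg : ∀ p : ℝ × ℝ × ℝ, med (-p.1) (-p.2.1) (-p.2.2) = - med p.1 p.2.1 p.2.2 :=
    fun p => med_neg p.1 p.2.1 p.2.2
  simp only [hneg] at h
  rw [integral_neg] at h
  linarith

noncomputable def gE (x : ℝ) : ℝ≥0∞ := ENNReal.ofReal (x^2 * gpdf x)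

lemma meas_gE : Measurable gE :=
  ((measurable_id.pow_const 2).mul cont_gpdf.measurable).ennreal_ofReal

noncomputable def NE (a b : ℝ) : ℝ≥0∞ := ∫⁻ x, gE x * chlt a x * chlt x b

lemma chlt_le_one (a x : ℝ) : chlt a x ≤ 1 := by
  rw [chlt_eq]; split_ifs <;> simp

lemma lint_gE : ∫⁻ x, gE x = 1 := by
  unfold gE
  rw [← ofReal_integral_eq_lintegral_ofReal integrable_sq_gpdf
    (ae_of_all _ fun x => mul_nonneg (sq_nonneg x) (gpdf_nonneg x)), integral_sq_gpdf]
  norm_num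

lemma NE_le_one (a b : ℝ) : NE a b ≤ 1 := by
  rw [← lint_gE]
  apply lintegral_mono
  intro x
  calc gE x * chlt a x * chlt x b ≤ gE x * 1 * 1 := by
        gcongr
        exacts [chlt_le_one a x, chlt_le_one x b]
    _ = gE x := by ring

lemma meas_chlt_l (a : ℝ) : Measurable (fun x => chlt a x) :=
  meas_chlt.comp (measurable_const.prodMk measurable_id)

lemma meas_chlt_r (b : ℝ) : Measurable (fun x => chlt x b) :=
  meas_chlt.comp (measurable_id.prodMk measurable_const)

lemma meas_NE_b (a : ℝ) : Measurable (fun b => NE a b) := by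
  unfold NE
  apply Measurable.lintegral_prod_right'
    (f := fun q : ℝ × ℝ => gE q.2 * chlt a q.2 * chlt q.2 q.1)
  exact ((meas_gE.comp measurable_snd).mul
    ((meas_chlt_l a).comp measurable_snd)).mul
    (meas_chlt.comp (measurable_snd.prodMk measurable_fst))

lemma lint_vol_chlt_right (x : ℝ) : ∫⁻ b, ψ b * chlt x b = ENNReal.ofReal (1 - gcdf x) := by
  rw [← lintegral_gauss (fun b => chlt x b) (meas_chlt_l x)]
  exact lint_gauss_chlt_right x

lemma lint_vol_chlt_left (x : ℝ) : ∫⁻ a, ψ a * chlt a x = ENNReal.ofReal (gcdf x) := by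
  rw [← lintegral_gauss (fun a => chlt a x) (meas_chlt_r x)]
  exact lint_gauss_chlt_left x

lemma step_x (a : ℝ) : ∫⁻ b, ψ b * NE a b
    = ∫⁻ x, gE x * chlt a x * ENNReal.ofReal (1 - gcdf x) := by
  unfold NE
  have h1 : ∀ b, ψ b * ∫⁻ x, gE x * chlt a x * chlt x b
      = ∫⁻ x, ψ b * (gE x * chlt a x * chlt x b) := by
    intro b
    rw [lintegral_const_mul _ (((meas_gE.fun_mul (meas_chlt_l a))).fun_mul (meas_chlt_r b))]
  simp_rw [h1]
  have hswap : AEMeasurable (Function.uncurry fun b x => ψ b * (gE x * chlt a x * chlt x b))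
      ((volume : Measure ℝ).prod (volume : Measure ℝ)) := by
    apply Measurable.aemeasurable
    have : Measurable (fun q : ℝ × ℝ => ψ q.1 * (gE q.2 * chlt a q.2 * chlt q.2 q.1)) :=
      (meas_ψ.comp measurable_fst).mul
        (((meas_gE.comp measurable_snd).mul ((meas_chlt_l a).comp measurable_snd)).mul
          (meas_chlt.comp (measurable_snd.prodMk measurable_fst)))
    exact this
  rw [lintegral_lintegral_swap hswap]
  congr 1
  funext x
  have h2 : ∀ b, ψ b * (gE x * chlt a x * chlt x b)
      = (gE x * chlt a x) * (ψ b * chlt x b) := by intro b; ring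
  simp_rw [h2]
  rw [lintegral_const_mul _ (meas_ψ.fun_mul (meas_chlt_l x)), lint_vol_chlt_right x]

lemma step_a : ∫⁻ a, ψ a * ∫⁻ x, gE x * chlt a x * ENNReal.ofReal (1 - gcdf x)
    = ENNReal.ofReal (1/6 - Real.sqrt 3 / (6*π)) := by
  have hQ : Measurable (fun x : ℝ => ENNReal.ofReal (1 - gcdf x)) :=
    (measurable_const.sub cont_gcdf.measurable).ennreal_ofReal
  have h1 : ∀ a, ψ a * ∫⁻ x, gE x * chlt a x * ENNReal.ofReal (1 - gcdf x)
      = ∫⁻ x, ψ a * (gE x * chlt a x * ENNReal.ofReal (1 - gcdf x)) := by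
    intro a
    rw [lintegral_const_mul _ ((meas_gE.fun_mul (meas_chlt_l a)).fun_mul hQ)]
  simp_rw [h1]
  have hswap : AEMeasurable (Function.uncurry fun a x =>
      ψ a * (gE x * chlt a x * ENNReal.ofReal (1 - gcdf x)))
      ((volume : Measure ℝ).prod (volume : Measure ℝ)) := by
    apply Measurable.aemeasurable
    have : Measurable (fun q : ℝ × ℝ =>
        ψ q.1 * (gE q.2 * chlt q.1 q.2 * ENNReal.ofReal (1 - gcdf q.2))) :=
      (meas_ψ.comp measurable_fst).mul
        (((meas_gE.comp measurable_snd).mul meas_chlt).mul (hQ.comp measurable_snd))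
    exact this
  rw [lintegral_lintegral_swap hswap]
  have h2 : ∀ x, (∫⁻ a, ψ a * (gE x * chlt a x * ENNReal.ofReal (1 - gcdf x)))
      = gE x * ENNReal.ofReal (gcdf x) * ENNReal.ofReal (1 - gcdf x) := by
    intro x
    have h3 : ∀ a, ψ a * (gE x * chlt a x * ENNReal.ofReal (1 - gcdf x))
        = (gE x * ENNReal.ofReal (1 - gcdf x)) * (ψ a * chlt a x) := by intro a; ring
    simp_rw [h3]
    rw [lintegral_const_mul _ (meas_ψ.fun_mul (meas_chlt_r x)), lint_vol_chlt_left x]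
    ring
  simp_rw [h2]
  have heq : ∀ x : ℝ, gE x * ENNReal.ofReal (gcdf x) * ENNReal.ofReal (1 - gcdf x)
      = ENNReal.ofReal (x^2 * gpdf x * (gcdf x * (1 - gcdf x))) := by
    intro x
    unfold gE
    rw [ENNReal.ofReal_mul (mul_nonneg (sq_nonneg x) (gpdf_nonneg x)),
      ENNReal.ofReal_mul (gcdf_nonneg x)]
    ring
  simp_rw [heq]
  rw [← ofReal_integral_eq_lintegral_ofReal integrable_Ifun (ae_of_all _ fun x =>
    mul_nonneg (mul_nonneg (sq_nonneg x) (gpdf_nonneg x))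
      (mul_nonneg (gcdf_nonneg x) (by linarith [gcdf_le_one x])))]
  rw [integral_Ifun]

lemma W_eq (a b : ℝ) : ∫ x in Set.Ioo a b, x^2 * gpdf x = (NE a b).toReal := by
  have hind : ∀ x, gE x * chlt a x * chlt x b = (Set.Ioo a b).indicator gE x := by
    intro x
    rw [chlt_eq, chlt_eq, Set.indicator_apply]
    by_cases h1 : a < x
    · by_cases h2 : x < b
      · simp [Set.mem_Ioo, h1, h2]
      · simp [Set.mem_Ioo, h1, h2]
    · simp [Set.mem_Ioo, h1]
  unfold NE
  simp_rw [hind]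
  rw [lintegral_indicator measurableSet_Ioo]
  rw [integral_eq_lintegral_of_nonneg_ae
    (ae_of_all _ fun x => mul_nonneg (sq_nonneg x) (gpdf_nonneg x))
    (((continuous_id.pow 2).mul cont_gpdf).aestronglyMeasurable.restrict)]
  rfl

lemma conj2_inner (a b : ℝ) :
    ∫ x in Set.Ioo a b, x^2 * rexp (-(a^2+b^2+x^2)/2)
      = Real.sqrt (2*π)^3 * (gpdf a * (gpdf b * (NE a b).toReal)) := by
  have hsπ : Real.sqrt (2*π) ≠ 0 := by positivity
  have hpt : ∀ x : ℝ, x^2 * rexp (-(a^2+b^2+x^2)/2)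
      = (Real.sqrt (2*π)^3 * (gpdf a * gpdf b)) * (x^2 * gpdf x) := by
    intro x
    rw [gpdf_eq, gpdf_eq, gpdf_eq,
      show (-(a^2+b^2+x^2)/2 : ℝ) = (-a^2/2) + ((-b^2/2) + (-x^2/2)) by ring,
      Real.exp_add, Real.exp_add]
    field_simp
  rw [setIntegral_congr_fun measurableSet_Ioo (fun x _ => hpt x), integral_const_mul, W_eq a b]
  ring

lemma meas_psi_NE (a : ℝ) : Measurable (fun b => ψ b * NE a b) := meas_ψ.mul (meas_NE_b a)

lemma psi_NE_fin (a : ℝ) : ∀ᵐ b : ℝ, ψ b * NE a b < ⊤ := by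
  filter_upwards with b
  calc ψ b * NE a b ≤ ψ b * 1 := by gcongr; exact NE_le_one a b
    _ = ψ b := by ring
    _ < ⊤ := ENNReal.ofReal_lt_top

lemma inner_b (a : ℝ) : ∫ b, gpdf b * (NE a b).toReal = (∫⁻ b, ψ b * NE a b).toReal := by
  have h : ∀ b, gpdf b * (NE a b).toReal = ((ψ b) * NE a b).toReal := by
    intro b
    rw [ENNReal.toReal_mul]
    unfold ψ
    rw [ENNReal.toReal_ofReal (gpdf_nonneg b)]
  simp_rw [h]
  exact integral_toReal (meas_psi_NE a).aemeasurable (psi_NE_fin a)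

lemma FA_meas : Measurable (fun a => ∫⁻ x, gE x * chlt a x * ENNReal.ofReal (1 - gcdf x)) := by
  apply Measurable.lintegral_prod_right'
    (f := fun q : ℝ × ℝ => gE q.2 * chlt q.1 q.2 * ENNReal.ofReal (1 - gcdf q.2))
  exact ((meas_gE.comp measurable_snd).mul meas_chlt).mul
    (((measurable_const.sub cont_gcdf.measurable).ennreal_ofReal).comp measurable_snd)

lemma FA_le_one (a : ℝ) : (∫⁻ x, gE x * chlt a x * ENNReal.ofReal (1 - gcdf x)) ≤ 1 := by
  rw [← lint_gE]
  apply lintegral_mono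
  intro x
  have h1 : ENNReal.ofReal (1 - gcdf x) ≤ 1 := by
    rw [show (1 : ℝ≥0∞) = ENNReal.ofReal (1:ℝ) by norm_num]
    exact ENNReal.ofReal_le_ofReal (by linarith [gcdf_nonneg x])
  calc gE x * chlt a x * ENNReal.ofReal (1 - gcdf x) ≤ gE x * 1 * 1 := by
        gcongr
        all_goals first | exact chlt_le_one a x | exact h1
    _ = gE x := by ring

lemma rpow_const_eq : (2*π : ℝ)^(-(3:ℝ)/2) = ((Real.sqrt (2*π))⁻¹)^3 := by
  have h0 : (0:ℝ) ≤ 2*π := by positivity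
  rw [show (-(3:ℝ)/2) = (-(1/2)) * ((3:ℕ):ℝ) by norm_num, Real.rpow_mul h0,
    Real.rpow_natCast, Real.rpow_neg h0, ← Real.sqrt_eq_rpow]

lemma conj2 : 6 * (2*π : ℝ)^(-(3:ℝ)/2) *
    (∫ a : ℝ, ∫ b : ℝ, ∫ x in Set.Ioo a b, x^2 * Real.exp (-(a^2 + b^2 + x^2)/2))
    = 1 - Real.sqrt 3 / π := by
  have hsπ : Real.sqrt (2*π) ≠ 0 := by positivity
  have e1 : ∀ a : ℝ, (∫ b : ℝ, ∫ x in Set.Ioo a b, x^2 * rexp (-(a^2 + b^2 + x^2)/2))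
      = Real.sqrt (2*π)^3 * (gpdf a * (∫⁻ b, ψ b * NE a b).toReal) := by
    intro a
    simp_rw [conj2_inner a]
    rw [integral_const_mul, integral_const_mul, inner_b a]
  simp_rw [e1]
  rw [integral_const_mul]
  simp_rw [step_x]
  have e2 : ∀ a : ℝ, gpdf a * (∫⁻ x, gE x * chlt a x * ENNReal.ofReal (1 - gcdf x)).toReal
      = (ψ a * ∫⁻ x, gE x * chlt a x * ENNReal.ofReal (1 - gcdf x)).toReal := by
    intro a
    rw [ENNReal.toReal_mul]
    unfold ψ
    rw [ENNReal.toReal_ofReal (gpdf_nonneg a)]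
  simp_rw [e2]
  rw [integral_toReal (meas_ψ.fun_mul FA_meas).aemeasurable (by
    filter_upwards with a
    calc ψ a * _ ≤ ψ a * 1 := by gcongr; exact FA_le_one a
      _ = ψ a := by ring
      _ < ⊤ := ENNReal.ofReal_lt_top)]
  rw [step_a, ENNReal.toReal_ofReal (by
    have h1 : Real.sqrt 3 / (6*π) < 1/6 := by
      rw [div_lt_div_iff₀ (by positivity) (by norm_num)]
      nlinarith [sqrt3_lt_pi, Real.pi_pos]
    linarith)]
  rw [rpow_const_eq]
  have hne : Real.sqrt (2*π) > 0 := by positivity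
  field_simp

theorem median_variance :
    ((∫ p : ℝ × ℝ × ℝ, (med p.1 p.2.1 p.2.2)^2 ∂μ3) -
      (∫ p : ℝ × ℝ × ℝ, med p.1 p.2.1 p.2.2 ∂μ3)^2 = 1 - Real.sqrt 3 / π)
    ∧ 6 * (2*π)^(-(3:ℝ)/2) *
        ∫ a : ℝ, ∫ b : ℝ, ∫ x in Set.Ioo a b,
          x^2 * Real.exp (-(a^2 + b^2 + x^2)/2)
      = 1 - Real.sqrt 3 / π := by
  constructor
  · rw [integral_med_sq, integral_med_mean]
    ring
  · exact conj2
end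

section
/- Let A, B, C be i.i.d. standard Gaussian points in ℝ². The expected area of the triangle ABC equals √3/2. -/
open Real MeasureTheory ProbabilityTheory

noncomputable def μ6 : Measure ((ℝ × ℝ) × (ℝ × ℝ) × (ℝ × ℝ)) :=
  (((gaussianReal 0 1).prod (gaussianReal 0 1)).prod
    (((gaussianReal 0 1).prod (gaussianReal 0 1)).prod
      ((gaussianReal 0 1).prod (gaussianReal 0 1))))

section EATsection
open Filter Set Topology
noncomputable section
namespace EAT

abbrev γ : Measure ℝ := gaussianReal 0 1
abbrev γ2 : Measure (ℝ × ℝ) := γ.prod γ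
abbrev γ4 : Measure ((ℝ × ℝ) × (ℝ × ℝ)) := γ2.prod γ2

lemma gp : γ2 = (volume : Measure (ℝ × ℝ)).withDensity
    (fun z => ENNReal.ofReal (gaussianPDFReal 0 1 z.1 * gaussianPDFReal 0 1 z.2)) := by
  refine Measure.prod_eq fun s t hs ht => ?_
  rw [withDensity_apply _ (hs.prod ht)]
  have : (volume : Measure (ℝ × ℝ)).restrict (s ×ˢ t)
      = (volume.restrict s).prod (volume.restrict t) := by
    rw [Measure.volume_eq_prod, Measure.prod_restrict]
  rw [this]
  have hmul : ∀ z : ℝ × ℝ, ENNReal.ofReal (gaussianPDFReal 0 1 z.1 * gaussianPDFReal 0 1 z.2)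
      = gaussianPDF 0 1 z.1 * gaussianPDF 0 1 z.2 := by
    intro z
    rw [gaussianPDF_def, ENNReal.ofReal_mul (gaussianPDFReal_nonneg 0 1 z.1)]
  simp_rw [hmul]
  rw [lintegral_prod_mul ((measurable_gaussianPDF 0 1).aemeasurable)
    ((measurable_gaussianPDF 0 1).aemeasurable)]
  simp only [γ]
  rw [gaussianReal_apply 0 one_ne_zero s, gaussianReal_apply 0 one_ne_zero t]


lemma vol_map_rot {p q r t : ℝ} (h1 : p^2 + r^2 = 1) (h2 : q^2 + t^2 = 1) (h3 : p*q + r*t = 0) :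
    (volume : Measure (ℝ × ℝ)).map (fun z : ℝ × ℝ => (p*z.1 + q*z.2, r*z.1 + t*z.2)) = volume := by
  have hdet : (Matrix.det !![p, q; r, t])^2 = 1 := by
    rw [Matrix.det_fin_two_of]; nlinarith
  have hdet' : Matrix.det !![p, q; r, t] ≠ 0 := by
    intro h; rw [h] at hdet; norm_num at hdet
  have hlin := Measure.map_linearMap_addHaar_eq_smul_addHaar (volume : Measure (ℝ × ℝ))
    (f := Matrix.toLin (Module.Basis.finTwoProd ℝ) (Module.Basis.finTwoProd ℝ) !![p, q; r, t])
    (by rw [LinearMap.det_toLin]; exact hdet')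
  have habs : |((Matrix.toLin (Module.Basis.finTwoProd ℝ) (Module.Basis.finTwoProd ℝ) !![p, q; r, t]).det)⁻¹| = 1 := by
    rw [LinearMap.det_toLin, abs_inv]
    have : |Matrix.det !![p, q; r, t]| = 1 := by
      have h0 := abs_nonneg (Matrix.det !![p, q; r, t])
      have : |Matrix.det !![p, q; r, t]|^2 = 1 := by rw [sq_abs]; exact hdet
      nlinarith
    rw [this]; norm_num
  have hfun : ⇑(Matrix.toLin (Module.Basis.finTwoProd ℝ) (Module.Basis.finTwoProd ℝ) !![p, q; r, t])
      = fun z : ℝ × ℝ => (p*z.1 + q*z.2, r*z.1 + t*z.2) := by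
    funext z; rw [Matrix.toLin_finTwoProd_apply]
  rw [hfun, habs] at hlin
  simpa using hlin

lemma pdf2_rot {p q r t : ℝ} (h1 : p^2 + r^2 = 1) (h2 : q^2 + t^2 = 1) (h3 : p*q + r*t = 0)
    (z : ℝ × ℝ) :
    gaussianPDFReal 0 1 (p*z.1 + q*z.2) * gaussianPDFReal 0 1 (r*z.1 + t*z.2)
      = gaussianPDFReal 0 1 z.1 * gaussianPDFReal 0 1 z.2 := by
  simp only [gaussianPDFReal]
  push_cast
  rw [mul_mul_mul_comm, ← Real.exp_add, mul_mul_mul_comm, ← Real.exp_add]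
  have key : (p*z.1 + q*z.2)^2 + (r*z.1 + t*z.2)^2 = z.1^2 + z.2^2 := by
    linear_combination z.1^2 * h1 + z.2^2 * h2 + (2*z.1*z.2) * h3
  congr 1
  apply congrArg
  linear_combination (-(1:ℝ)/2) * key

lemma orth {p q r t : ℝ} (h1 : p^2 + r^2 = 1) (h2 : q^2 + t^2 = 1) (h3 : p*q + r*t = 0) :
    MeasurePreserving (fun z : ℝ × ℝ => (p*z.1 + q*z.2, r*z.1 + t*z.2)) γ2 γ2 := by
  set R := fun z : ℝ × ℝ => (p*z.1 + q*z.2, r*z.1 + t*z.2) with hR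
  have hmR : Measurable R := by fun_prop
  set ρ := fun z : ℝ × ℝ => ENNReal.ofReal (gaussianPDFReal 0 1 z.1 * gaussianPDFReal 0 1 z.2) with hρ
  have hmρ : Measurable ρ := by
    apply Measurable.ennreal_ofReal
    exact ((measurable_gaussianPDFReal 0 1).comp measurable_fst).mul
      ((measurable_gaussianPDFReal 0 1).comp measurable_snd)
  refine ⟨hmR, ?_⟩
  rw [gp]
  ext s hs
  rw [Measure.map_apply hmR hs, withDensity_apply _ (hmR hs), withDensity_apply _ hs]
  have hinv : ∀ z, ρ (R z) = ρ z := fun z => by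
    simp only [hρ, hR]; rw [pdf2_rot h1 h2 h3]
  calc ∫⁻ x in R ⁻¹' s, ρ x ∂volume
      = ∫⁻ x in R ⁻¹' s, ρ (R x) ∂volume := by
        refine setLIntegral_congr_fun (hmR hs) (fun x _ => (hinv x).symm)
    _ = ∫⁻ y in s, ρ y ∂(volume.map R) := (setLIntegral_map hs hmρ hmR).symm
    _ = ∫⁻ y in s, ρ y ∂volume := by rw [vol_map_rot h1 h2 h3]


def W : (ℝ × ℝ) × (ℝ × ℝ) → (ℝ × ℝ) × (ℝ × ℝ) :=
  fun z => ((z.1.1, z.2.1), (z.1.2, z.2.2))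

lemma mpW : MeasurePreserving W γ4 γ4 := by
  have e1 := measurePreserving_prodAssoc γ γ γ2
  have e2 : MeasurePreserving
      (Prod.map (id : ℝ → ℝ) (⇑(MeasurableEquiv.prodAssoc (α := ℝ) (β := ℝ) (γ := ℝ)).symm))
      (γ.prod (γ.prod γ2)) (γ.prod (γ2.prod γ)) :=
    (MeasurePreserving.id γ).prod
      ((measurePreserving_prodAssoc γ γ γ).symm MeasurableEquiv.prodAssoc)
  have e3 : MeasurePreserving (Prod.map (id : ℝ → ℝ) (Prod.map (Prod.swap : ℝ × ℝ → ℝ × ℝ) (id : ℝ → ℝ)))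
      (γ.prod (γ2.prod γ)) (γ.prod (γ2.prod γ)) :=
    (MeasurePreserving.id γ).prod
      ((Measure.measurePreserving_swap).prod (MeasurePreserving.id γ))
  have e4 : MeasurePreserving
      (Prod.map (id : ℝ → ℝ) (⇑(MeasurableEquiv.prodAssoc (α := ℝ) (β := ℝ) (γ := ℝ))))
      (γ.prod (γ2.prod γ)) (γ.prod (γ.prod γ2)) :=
    (MeasurePreserving.id γ).prod (measurePreserving_prodAssoc γ γ γ)
  have e5 : MeasurePreserving (⇑(MeasurableEquiv.prodAssoc (α := ℝ) (β := ℝ) (γ := ℝ × ℝ)).symm)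
      (γ.prod (γ.prod γ2)) γ4 :=
    (measurePreserving_prodAssoc γ γ γ2).symm MeasurableEquiv.prodAssoc
  have comp := e5.comp (e4.comp (e3.comp (e2.comp e1)))
  have hWeq : W = (⇑(MeasurableEquiv.prodAssoc (α := ℝ) (β := ℝ) (γ := ℝ × ℝ)).symm) ∘
      ((Prod.map (id : ℝ → ℝ) (⇑(MeasurableEquiv.prodAssoc (α := ℝ) (β := ℝ) (γ := ℝ)))) ∘
      ((Prod.map (id : ℝ → ℝ) (Prod.map (Prod.swap : ℝ × ℝ → ℝ × ℝ) (id : ℝ → ℝ))) ∘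
      ((Prod.map (id : ℝ → ℝ) (⇑(MeasurableEquiv.prodAssoc (α := ℝ) (β := ℝ) (γ := ℝ)).symm)) ∘
      (⇑(MeasurableEquiv.prodAssoc (α := ℝ) (β := ℝ) (γ := ℝ × ℝ)))))) := by
    funext z; rfl
  rw [hWeq]; exact comp

/-- componentwise rotation on pairs of planar points -/
lemma orth2 {p q r t : ℝ} (h1 : p^2 + r^2 = 1) (h2 : q^2 + t^2 = 1) (h3 : p*q + r*t = 0) :
    MeasurePreserving (fun z : (ℝ × ℝ) × (ℝ × ℝ) =>
      ((p*z.1.1 + q*z.2.1, p*z.1.2 + q*z.2.2), (r*z.1.1 + t*z.2.1, r*z.1.2 + t*z.2.2))) γ4 γ4 := by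
  have comp := mpW.comp (((orth h1 h2 h3).prod (orth h1 h2 h3)).comp mpW)
  have heq : (fun z : (ℝ × ℝ) × (ℝ × ℝ) =>
      ((p*z.1.1 + q*z.2.1, p*z.1.2 + q*z.2.2), (r*z.1.1 + t*z.2.1, r*z.1.2 + t*z.2.2)))
      = W ∘ ((Prod.map (fun z : ℝ × ℝ => (p*z.1 + q*z.2, r*z.1 + t*z.2))
          (fun z : ℝ × ℝ => (p*z.1 + q*z.2, r*z.1 + t*z.2))) ∘ W) := by
    funext z; rfl
  rw [heq]; exact comp


lemma hd_exp (x : ℝ) : HasDerivAt (fun y : ℝ => rexp (-(1/2) * y^2))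
    (rexp (-(1/2) * x^2) * (-x)) x := by
  have hx : HasDerivAt (fun y : ℝ => -(1/2) * y^2) (-x) x := by
    have := (hasDerivAt_pow 2 x).const_mul (-(1/2) : ℝ)
    refine this.congr_deriv ?_
    norm_num; ring
  simpa using hx.exp

lemma int1 : ∫ x in Ioi (0:ℝ), x * rexp (-(1/2) * x^2) = 1 := by
  have A : ∀ x ∈ Ici (0:ℝ), HasDerivAt (fun y : ℝ => -rexp (-(1/2) * y^2))
      (x * rexp (-(1/2) * x^2)) x := by
    intro x _
    have := (hd_exp x).neg
    refine this.congr_deriv ?_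
    ring
  have Hint : IntegrableOn (fun x : ℝ => x * rexp (-(1/2) * x^2)) (Ioi 0) :=
    (integrable_mul_exp_neg_mul_sq (by norm_num : (0:ℝ) < 1/2)).integrableOn
  have B : Tendsto (fun y : ℝ => -rexp (-(1/2) * y^2)) atTop (𝓝 0) := by
    rw [show (0:ℝ) = -0 by norm_num]
    apply Tendsto.neg
    apply tendsto_exp_atBot.comp
    exact (tendsto_pow_atTop two_ne_zero).const_mul_atTop_of_neg (by norm_num)
  have := integral_Ioi_of_hasDerivAt_of_tendsto' A Hint B
  simpa using this

lemma integrable_sq_exp : Integrable (fun x : ℝ => x^2 * rexp (-(1/2) * x^2)) := by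
  have h := integrable_rpow_mul_exp_neg_mul_sq (by norm_num : (0:ℝ) < 1/2)
    (s := 2) (by norm_num)
  have h2 : ∀ x : ℝ, x ^ (2:ℝ) = x ^ (2:ℕ) := fun x => by
    rw [show (2:ℝ) = ((2:ℕ):ℝ) by norm_num, Real.rpow_natCast]
  simpa [h2] using h

lemma int2 : ∫ x in Ioi (0:ℝ), x^2 * rexp (-(1/2) * x^2) = √(2*π)/2 := by
  have A : ∀ x ∈ Ici (0:ℝ), HasDerivAt (fun y : ℝ => -y * rexp (-(1/2) * y^2))
      (x^2 * rexp (-(1/2) * x^2) - rexp (-(1/2) * x^2)) x := by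
    intro x _
    have h1 : HasDerivAt (fun y : ℝ => -y) (-1 : ℝ) x := (hasDerivAt_id x).neg
    have := h1.mul (hd_exp x)
    refine this.congr_deriv ?_
    ring
  have He : Integrable (fun x : ℝ => rexp (-(1/2) * x^2)) :=
    integrable_exp_neg_mul_sq (by norm_num : (0:ℝ) < 1/2)
  have Hint : IntegrableOn
      (fun x : ℝ => x^2 * rexp (-(1/2) * x^2) - rexp (-(1/2) * x^2)) (Ioi 0) :=
    (integrable_sq_exp.sub He).integrableOn
  have B : Tendsto (fun y : ℝ => -y * rexp (-(1/2) * y^2)) atTop (𝓝 0) := by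
    have h0 := tendsto_rpow_abs_mul_exp_neg_mul_sq_cocompact
      (by norm_num : (0:ℝ) < 1/2) 1
    have h1 : Tendsto (fun x : ℝ => |x| ^ (1:ℝ) * rexp (-(1/2) * x^2)) atTop (𝓝 0) := by
      apply h0.mono_left
      rw [cocompact_eq_atBot_atTop]
      exact le_sup_right
    have h2 := h1.neg
    rw [neg_zero] at h2
    apply h2.congr'
    filter_upwards [eventually_gt_atTop (0:ℝ)] with x hx
    rw [Real.rpow_one, abs_of_pos hx]
    ring
  have key := integral_Ioi_of_hasDerivAt_of_tendsto' A Hint B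
  simp only [neg_zero, zero_mul, sub_zero] at key
  have split := integral_sub (integrable_sq_exp.integrableOn (s := Ioi 0))
    (He.integrableOn (s := Ioi 0))
  rw [key] at split
  have hg : ∫ x in Ioi (0:ℝ), rexp (-(1/2) * x^2) = √(2*π)/2 := by
    have := integral_gaussian_Ioi (1/2)
    rw [show π / (1/2) = 2*π by ring] at this
    exact this
  linarith [split, hg]


lemma pdf1 (x : ℝ) : gaussianPDFReal 0 1 x = (√(2*π))⁻¹ * rexp (-(1/2) * x^2) := by
  rw [gaussianPDFReal]
  push_cast
  rw [mul_one, sub_zero]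
  congr 1
  congr 1
  ring

lemma sqrt2pi_pos : (0:ℝ) < √(2*π) := Real.sqrt_pos.mpr (by positivity)

lemma integrable_abs_pdf : Integrable (fun x : ℝ => |x| * rexp (-(1/2) * x^2)) := by
  have h := (integrable_mul_exp_neg_mul_sq (by norm_num : (0:ℝ) < 1/2)).abs
  refine h.congr (ae_of_all _ fun x => ?_)
  show |x * rexp (-(1/2) * x^2)| = |x| * rexp (-(1/2) * x^2)
  rw [abs_mul, abs_of_pos (exp_pos _)]

/-- `∫⁻ |x| dγ = √(2/π)` -/
lemma abs_moment : ∫⁻ x, ENNReal.ofReal |x| ∂γ = ENNReal.ofReal (√(2/π)) := by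
  have hγ : γ = volume.withDensity (gaussianPDF 0 1) :=
    gaussianReal_of_var_ne_zero 0 one_ne_zero
  rw [hγ, lintegral_withDensity_eq_lintegral_mul volume (measurable_gaussianPDF 0 1)
    (measurable_abs.ennreal_ofReal)]
  have heq : ∀ x : ℝ, (gaussianPDF 0 1 * fun x => ENNReal.ofReal |x|) x
      = ENNReal.ofReal ((√(2*π))⁻¹ * (|x| * rexp (-(1/2) * x^2))) := by
    intro x
    simp only [Pi.mul_apply, gaussianPDF_def]
    rw [← ENNReal.ofReal_mul (gaussianPDFReal_nonneg 0 1 x), pdf1]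
    ring_nf
  simp_rw [heq]
  rw [← ofReal_integral_eq_lintegral_ofReal (integrable_abs_pdf.const_mul _)
    (ae_of_all _ fun x => by positivity)]
  congr 1
  rw [integral_const_mul]
  have habs : ∫ x : ℝ, |x| * rexp (-(1/2) * x^2) = 2 * ∫ x in Ioi (0:ℝ), x * rexp (-(1/2) * x^2) := by
    have := integral_comp_abs (f := fun t => t * rexp (-(1/2) * t^2))
    rw [← this]
    congr 1
    funext x
    rw [sq_abs]
  rw [habs, int1]
  rw [show √(2/π) = 2 / √(2*π) by
    rw [eq_div_iff (ne_of_gt sqrt2pi_pos), ← Real.sqrt_mul (by positivity)]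
    rw [show 2/π * (2*π) = 4 by field_simp; ring]
    rw [show (4:ℝ) = 2^2 by norm_num, Real.sqrt_sq (by norm_num)]]
  field_simp

/-- `∫⁻ ‖z‖ dγ2 = √(π/2)` -/
lemma norm_moment : ∫⁻ z : ℝ × ℝ, ENNReal.ofReal (√(z.1^2 + z.2^2)) ∂γ2
    = ENNReal.ofReal (√(π/2)) := by
  have hm2 : Measurable fun z : ℝ × ℝ =>
      ENNReal.ofReal (gaussianPDFReal 0 1 z.1 * gaussianPDFReal 0 1 z.2) :=
    (((measurable_gaussianPDFReal 0 1).comp measurable_fst).mul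
      ((measurable_gaussianPDFReal 0 1).comp measurable_snd)).ennreal_ofReal
  rw [gp, lintegral_withDensity_eq_lintegral_mul volume hm2
    (by fun_prop : Measurable fun z : ℝ × ℝ => ENNReal.ofReal (√(z.1^2 + z.2^2)))]
  set c : ℝ := (√(2*π))⁻¹ with hc
  have heq : ∀ z : ℝ × ℝ, ((fun z : ℝ × ℝ => ENNReal.ofReal (gaussianPDFReal 0 1 z.1 * gaussianPDFReal 0 1 z.2)) * fun z : ℝ × ℝ => ENNReal.ofReal (√(z.1^2 + z.2^2))) z
      = ENNReal.ofReal (√(z.1^2 + z.2^2) * ((c * rexp (-(1/2) * z.1^2)) * (c * rexp (-(1/2) * z.2^2)))) := by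
    intro z
    simp only [Pi.mul_apply]
    rw [← ENNReal.ofReal_mul (mul_nonneg (gaussianPDFReal_nonneg 0 1 z.1)
      (gaussianPDFReal_nonneg 0 1 z.2)), pdf1, pdf1]
    congr 1
    ring
  simp_rw [heq]
  -- integrability of the integrand on ℝ²
  have hint : Integrable (fun z : ℝ × ℝ =>
      √(z.1^2 + z.2^2) * ((c * rexp (-(1/2) * z.1^2)) * (c * rexp (-(1/2) * z.2^2)))) := by
    have hf : Integrable (fun x : ℝ => |x| * (c * rexp (-(1/2) * x^2))) := by
      refine (integrable_abs_pdf.const_mul c).congr (ae_of_all _ fun x => ?_)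
      ring
    have hg : Integrable (fun x : ℝ => c * rexp (-(1/2) * x^2)) :=
      (integrable_exp_neg_mul_sq (by norm_num : (0:ℝ) < 1/2)).const_mul c
    have h1 : Integrable (fun z : ℝ × ℝ =>
        (|z.1| * (c * rexp (-(1/2) * z.1^2))) * (c * rexp (-(1/2) * z.2^2))) :=
      hf.mul_prod hg
    have h2 : Integrable (fun z : ℝ × ℝ =>
        (c * rexp (-(1/2) * z.1^2)) * (|z.2| * (c * rexp (-(1/2) * z.2^2)))) :=
      hg.mul_prod hf
    refine (h1.add h2).mono' ?_ (ae_of_all _ fun z => ?_)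
    · apply Continuous.aestronglyMeasurable; fun_prop
    · have hb : √(z.1^2 + z.2^2) ≤ |z.1| + |z.2| := by
        rw [show |z.1| + |z.2| = √((|z.1| + |z.2|)^2) from (Real.sqrt_sq (by positivity)).symm]
        apply Real.sqrt_le_sqrt
        have h1 := sq_abs z.1
        have h2 := sq_abs z.2
        nlinarith [abs_nonneg z.1, abs_nonneg z.2]
      have hnn : (0:ℝ) ≤ (c * rexp (-(1/2) * z.1^2)) * (c * rexp (-(1/2) * z.2^2)) := by positivity
      rw [Real.norm_eq_abs, abs_of_nonneg (by positivity)]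
      calc √(z.1^2 + z.2^2) * ((c * rexp (-(1/2) * z.1^2)) * (c * rexp (-(1/2) * z.2^2)))
          ≤ (|z.1| + |z.2|) * ((c * rexp (-(1/2) * z.1^2)) * (c * rexp (-(1/2) * z.2^2))) :=
            mul_le_mul_of_nonneg_right hb hnn
        _ = (|z.1| * (c * rexp (-(1/2) * z.1^2))) * (c * rexp (-(1/2) * z.2^2))
            + (c * rexp (-(1/2) * z.1^2)) * (|z.2| * (c * rexp (-(1/2) * z.2^2))) := by ring
  rw [← ofReal_integral_eq_lintegral_ofReal hint (ae_of_all _ fun z => by positivity)]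
  congr 1
  -- polar coordinates
  rw [← integral_comp_polarCoord_symm]
  simp_rw [polarCoord_symm_apply]
  have htgt : ∀ p ∈ polarCoord.target,
      p.1 • (√((p.1 * cos p.2)^2 + (p.1 * sin p.2)^2) *
        ((c * rexp (-(1/2) * (p.1 * cos p.2)^2)) * (c * rexp (-(1/2) * (p.1 * sin p.2)^2))))
      = (p.1^2 * rexp (-(1/2) * p.1^2)) * (c^2) := by
    intro p hp
    rw [polarCoord_target] at hp
    have hp1 : 0 < p.1 := hp.1
    have hsq : (p.1 * cos p.2)^2 + (p.1 * sin p.2)^2 = p.1^2 := by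
      have := sin_sq_add_cos_sq p.2
      ring_nf
      nlinarith [this]
    rw [hsq, Real.sqrt_sq hp1.le, smul_eq_mul]
    have hexp : rexp (-(1/2) * (p.1 * cos p.2)^2) * rexp (-(1/2) * (p.1 * sin p.2)^2)
        = rexp (-(1/2) * p.1^2) := by
      rw [← Real.exp_add]
      congr 1
      linear_combination (-(1:ℝ)/2) * hsq
    linear_combination (p.1^2 * c^2) * hexp
  rw [setIntegral_congr_fun (polarCoord.open_target.measurableSet) htgt]
  rw [polarCoord_target]
  rw [Measure.volume_eq_prod]
  rw [setIntegral_prod_mul (fun r : ℝ => r^2 * rexp (-(1/2) * r^2)) (fun _ : ℝ => c^2)]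
  rw [int2]
  simp only [integral_const, MeasurableSet.univ, Measure.restrict_apply, univ_inter, volume_Ioo,
    smul_eq_mul]
  rw [measureReal_restrict_apply_univ, volume_real_Ioo_of_le (by linarith [pi_pos])]
  rw [sub_neg_eq_add, ← two_mul]
  rw [hc]
  rw [show ((√(2*π))⁻¹)^2 = (2*π)⁻¹ by
    rw [← Real.sqrt_inv, Real.sq_sqrt (by positivity)]]
  rw [show √(2*π)/2 * (2*π * (2*π)⁻¹) = √(2*π)/2 by field_simp]
  rw [show √(π/2) = √(2*π)/2 by
    rw [eq_div_iff (by norm_num : (2:ℝ) ≠ 0)]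
    have h := Real.sqrt_mul (by positivity : (0:ℝ) ≤ π/2) 4
    rw [show (π/2)*4 = 2*π by ring] at h
    rw [show √(4:ℝ) = 2 by
      rw [show (4:ℝ) = 2^2 by norm_num, Real.sqrt_sq (by norm_num : (0:ℝ) ≤ 2)]] at h
    linarith]


lemma marg_abs : ∫⁻ z : ℝ × ℝ, ENNReal.ofReal |z.1| ∂γ2 = ENNReal.ofReal (√(2/π)) := by
  rw [lintegral_prod _ (by fun_prop)]
  simp only [lintegral_const, measure_univ, mul_one]
  exact abs_moment

lemma det_moment (u v : ℝ) :
    ∫⁻ z : ℝ × ℝ, ENNReal.ofReal |z.1 * u - z.2 * v| ∂γ2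
      = ENNReal.ofReal (√(u^2 + v^2) * √(2/π)) := by
  by_cases h0 : u^2 + v^2 = 0
  · have hu : u = 0 := by nlinarith [sq_nonneg u, sq_nonneg v]
    have hv : v = 0 := by nlinarith [sq_nonneg u, sq_nonneg v]
    simp [hu, hv]
  · set r0 : ℝ := √(u^2 + v^2) with hr0def
    have hr0 : 0 < r0 := Real.sqrt_pos.mpr (lt_of_le_of_ne (by positivity) (Ne.symm h0))
    have hr0sq : r0^2 = u^2 + v^2 := Real.sq_sqrt (by positivity)
    have hr0ne : r0 ≠ 0 := ne_of_gt hr0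
    have h1 : (u/r0)^2 + (-v/r0)^2 = 1 := by
      field_simp
      linarith [hr0sq]
    have h2 : (v/r0)^2 + (u/r0)^2 = 1 := by
      field_simp
      linarith [hr0sq]
    have h3 : (u/r0)*(v/r0) + (-v/r0)*(u/r0) = 0 := by ring
    have mp := orth h1 h2 h3
    have hf : Measurable fun z : ℝ × ℝ => ENNReal.ofReal |z.1 * u - z.2 * v| := by fun_prop
    calc ∫⁻ z : ℝ × ℝ, ENNReal.ofReal |z.1 * u - z.2 * v| ∂γ2
        = ∫⁻ z : ℝ × ℝ, ENNReal.ofReal |z.1 * u - z.2 * v| ∂(γ2.map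
            (fun z : ℝ × ℝ => ((u/r0)*z.1 + (v/r0)*z.2, (-v/r0)*z.1 + (u/r0)*z.2))) := by
          rw [mp.map_eq]
      _ = ∫⁻ z : ℝ × ℝ, ENNReal.ofReal
            |((u/r0)*z.1 + (v/r0)*z.2) * u - ((-v/r0)*z.1 + (u/r0)*z.2) * v| ∂γ2 :=
          lintegral_map hf mp.measurable
      _ = ∫⁻ z : ℝ × ℝ, ENNReal.ofReal r0 * ENNReal.ofReal |z.1| ∂γ2 := by
          refine lintegral_congr fun z => ?_
          rw [← ENNReal.ofReal_mul hr0.le]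
          congr 1
          rw [show ((u/r0)*z.1 + (v/r0)*z.2) * u - ((-v/r0)*z.1 + (u/r0)*z.2) * v = r0 * z.1 by
            field_simp
            linear_combination (-z.1) * hr0sq]
          rw [abs_mul, abs_of_pos hr0]
      _ = ENNReal.ofReal r0 * ∫⁻ z : ℝ × ℝ, ENNReal.ofReal |z.1| ∂γ2 :=
          lintegral_const_mul _ (by fun_prop)
      _ = ENNReal.ofReal (√(u^2 + v^2) * √(2/π)) := by
          rw [marg_abs, ← ENNReal.ofReal_mul hr0.le]


def gg : (ℝ × ℝ) × (ℝ × ℝ) × (ℝ × ℝ) → ENNReal := fun p =>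
  ENNReal.ofReal ((1/2) * |(p.2.1.1 - p.1.1) * (p.2.2.2 - p.1.2) -
               (p.2.1.2 - p.1.2) * (p.2.2.1 - p.1.1)|)

lemma gg_meas : Measurable gg := by unfold gg; fun_prop

lemma main_lintegral :
    ∫⁻ p, gg p ∂(γ2.prod (γ2.prod γ2)) = ENNReal.ofReal (√3/2) := by
  have hs2 : (√2)^2 = 2 := Real.sq_sqrt (by norm_num)
  have hs3 : (√3)^2 = 3 := Real.sq_sqrt (by norm_num)
  -- round 1 rotation
  have h11 : (-√2/2)^2 + (√2/2)^2 = 1 := by linear_combination (1/2) * hs2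
  have h12 : (√2/2)^2 + (√2/2)^2 = 1 := by linear_combination (1/2) * hs2
  have h13 : (-√2/2)*(√2/2) + (√2/2)*(√2/2) = 0 := by ring
  have mp1 := orth2 h11 h12 h13
  set R1 : (ℝ × ℝ) × (ℝ × ℝ) → (ℝ × ℝ) × (ℝ × ℝ) := fun z =>
    (((-√2/2)*z.1.1 + (√2/2)*z.2.1, (-√2/2)*z.1.2 + (√2/2)*z.2.2),
     ((√2/2)*z.1.1 + (√2/2)*z.2.1, (√2/2)*z.1.2 + (√2/2)*z.2.2)) with hR1
  -- round 2 rotation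
  have h21 : (-√3/3)^2 + (√2*√3/3)^2 = 1 := by
    linear_combination ((√3)^2/9) * hs2 + (1/3) * hs3
  have h22 : (√2*√3/3)^2 + (√3/3)^2 = 1 := by
    linear_combination ((√3)^2/9) * hs2 + (1/3) * hs3
  have h23 : (-√3/3)*(√2*√3/3) + (√2*√3/3)*(√3/3) = 0 := by ring
  have mp2 := orth2 h21 h22 h23
  set R2 : (ℝ × ℝ) × (ℝ × ℝ) → (ℝ × ℝ) × (ℝ × ℝ) := fun z =>
    (((-√3/3)*z.1.1 + (√2*√3/3)*z.2.1, (-√3/3)*z.1.2 + (√2*√3/3)*z.2.2),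
     ((√2*√3/3)*z.1.1 + (√3/3)*z.2.1, (√2*√3/3)*z.1.2 + (√3/3)*z.2.2)) with hR2
  have hmR1 : Measurable R1 := by rw [hR1]; fun_prop
  have hmR2 : Measurable R2 := by rw [hR2]; fun_prop
  -- G1
  set G1 : (ℝ × ℝ) × (ℝ × ℝ) → ENNReal := fun w => ∫⁻ C, gg (w.1, (w.2, C)) ∂γ2 with hG1def
  have hG1 : Measurable G1 := by
    apply Measurable.lintegral_prod_right' (f := fun q : ((ℝ×ℝ)×(ℝ×ℝ)) × (ℝ×ℝ) =>
      gg (q.1.1, (q.1.2, q.2)))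
    exact gg_meas.comp (by fun_prop)
  -- G2
  set G2 : (ℝ × ℝ) × (ℝ × ℝ) → ENNReal := fun w =>
    ∫⁻ X, gg ((R1 (X, w.1)).1, ((R1 (X, w.1)).2, w.2)) ∂γ2 with hG2def
  have hG2 : Measurable G2 := by
    apply Measurable.lintegral_prod_left' (f := fun q : (ℝ×ℝ) × ((ℝ×ℝ)×(ℝ×ℝ)) =>
      gg ((R1 (q.1, q.2.1)).1, ((R1 (q.1, q.2.1)).2, q.2.2)))
    exact gg_meas.comp (by rw [hR1]; fun_prop)
  calc ∫⁻ p, gg p ∂(γ2.prod (γ2.prod γ2))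
      = ∫⁻ A, ∫⁻ w, gg (A, w) ∂(γ2.prod γ2) ∂γ2 :=
        lintegral_prod _ gg_meas.aemeasurable
    _ = ∫⁻ A, ∫⁻ B, ∫⁻ C, gg (A, (B, C)) ∂γ2 ∂γ2 ∂γ2 := by
        refine lintegral_congr fun A => ?_
        exact lintegral_prod _ (gg_meas.comp (by fun_prop)).aemeasurable
    _ = ∫⁻ z, G1 z ∂γ4 := (lintegral_prod _ hG1.aemeasurable).symm
    _ = ∫⁻ z, G1 (R1 z) ∂γ4 := by
        conv_lhs => rw [← mp1.map_eq]
        exact lintegral_map hG1 hmR1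
    _ = ∫⁻ X, ∫⁻ S, G1 (R1 (X, S)) ∂γ2 ∂γ2 :=
        lintegral_prod _ ((hG1.comp hmR1).aemeasurable)
    _ = ∫⁻ S, ∫⁻ X, G1 (R1 (X, S)) ∂γ2 ∂γ2 :=
        lintegral_lintegral_swap ((hG1.comp hmR1).aemeasurable)
    _ = ∫⁻ S, ∫⁻ C, ∫⁻ X, gg ((R1 (X, S)).1, ((R1 (X, S)).2, C)) ∂γ2 ∂γ2 ∂γ2 := by
        refine lintegral_congr fun S => ?_
        exact lintegral_lintegral_swap
          ((gg_meas.comp (f := fun w : (ℝ×ℝ) × (ℝ×ℝ) =>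
            ((R1 (w.1, S)).1, ((R1 (w.1, S)).2, w.2))) (by rw [hR1]; fun_prop)).aemeasurable)
    _ = ∫⁻ w, G2 w ∂γ4 := (lintegral_prod _ hG2.aemeasurable).symm
    _ = ∫⁻ w, G2 (R2 w) ∂γ4 := by
        conv_lhs => rw [← mp2.map_eq]
        exact lintegral_map hG2 hmR2
    _ = ∫⁻ H, ∫⁻ Z, G2 (R2 (H, Z)) ∂γ2 ∂γ2 :=
        lintegral_prod _ ((hG2.comp hmR2).aemeasurable)
    _ = ∫⁻ H, ∫⁻ Z, ∫⁻ X, ENNReal.ofReal ((√3/2) * |X.1 * H.2 - X.2 * H.1|) ∂γ2 ∂γ2 ∂γ2 := by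
        refine lintegral_congr fun H => lintegral_congr fun Z => lintegral_congr fun X => ?_
        show ENNReal.ofReal ((1/2) * _) = _
        congr 1
        have key : ((√2/2)*X.1 + (√2/2)*((-√3/3)*H.1 + (√2*√3/3)*Z.1)
              - ((-√2/2)*X.1 + (√2/2)*((-√3/3)*H.1 + (√2*√3/3)*Z.1)))
            * (((√2*√3/3)*H.2 + (√3/3)*Z.2)
              - ((-√2/2)*X.2 + (√2/2)*((-√3/3)*H.2 + (√2*√3/3)*Z.2)))
            - ((√2/2)*X.2 + (√2/2)*((-√3/3)*H.2 + (√2*√3/3)*Z.2)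
              - ((-√2/2)*X.2 + (√2/2)*((-√3/3)*H.2 + (√2*√3/3)*Z.2)))
            * (((√2*√3/3)*H.1 + (√3/3)*Z.1)
              - ((-√2/2)*X.1 + (√2/2)*((-√3/3)*H.1 + (√2*√3/3)*Z.1)))
            = √3 * (X.1 * H.2 - X.2 * H.1) := by
          linear_combination ((√3/2)*(X.1*H.2 - X.2*H.1)
            - (√2*√3/6)*(X.1*Z.2 - X.2*Z.1)) * hs2
        rw [key, abs_mul, abs_of_nonneg (Real.sqrt_nonneg 3)]
        ring
    _ = ∫⁻ H, ∫⁻ X, ENNReal.ofReal ((√3/2) * |X.1 * H.2 - X.2 * H.1|) ∂γ2 ∂γ2 := by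
        refine lintegral_congr fun H => ?_
        rw [lintegral_const]
        simp [measure_univ]
    _ = ∫⁻ H, ENNReal.ofReal (√3/2) * ∫⁻ X, ENNReal.ofReal (|X.1 * H.2 - X.2 * H.1|) ∂γ2 ∂γ2 := by
        refine lintegral_congr fun H => ?_
        rw [← lintegral_const_mul _ (by fun_prop)]
        refine lintegral_congr fun X => ?_
        rw [← ENNReal.ofReal_mul (by positivity)]
    _ = ENNReal.ofReal (√3/2) * ∫⁻ H, ∫⁻ X, ENNReal.ofReal (|X.1 * H.2 - X.2 * H.1|) ∂γ2 ∂γ2 := by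
        rw [← lintegral_const_mul _ ?hm]
        case hm =>
          apply Measurable.lintegral_prod_right' (f := fun q : (ℝ×ℝ) × (ℝ×ℝ) =>
            ENNReal.ofReal (|q.2.1 * q.1.2 - q.2.2 * q.1.1|))
          fun_prop
    _ = ENNReal.ofReal (√3/2) * ∫⁻ H, ENNReal.ofReal (√(H.2^2 + H.1^2) * √(2/π)) ∂γ2 := by
        congr 1
        exact lintegral_congr fun H => det_moment H.2 H.1
    _ = ENNReal.ofReal (√3/2) * (ENNReal.ofReal (√(2/π)) *
          ∫⁻ H, ENNReal.ofReal (√(H.1^2 + H.2^2)) ∂γ2) := by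
        congr 1
        rw [← lintegral_const_mul _ (by fun_prop)]
        refine lintegral_congr fun H => ?_
        rw [← ENNReal.ofReal_mul (Real.sqrt_nonneg _)]
        rw [add_comm (H.1^2), mul_comm]
    _ = ENNReal.ofReal (√3/2) * (ENNReal.ofReal (√(2/π)) * ENNReal.ofReal (√(π/2))) := by
        rw [norm_moment]
    _ = ENNReal.ofReal (√3/2) := by
        rw [← ENNReal.ofReal_mul (Real.sqrt_nonneg _), ← Real.sqrt_mul (by positivity)]
        rw [show (2/π) * (π/2) = 1 by field_simp]
        simp

end EAT
end
end EATsection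

theorem expected_area_triangle :
    ∫ p : (ℝ × ℝ) × (ℝ × ℝ) × (ℝ × ℝ),
      (1/2) * |(p.2.1.1 - p.1.1) * (p.2.2.2 - p.1.2) -
               (p.2.1.2 - p.1.2) * (p.2.2.1 - p.1.1)| ∂μ6
    = Real.sqrt 3 / 2 := by
  rw [MeasureTheory.integral_eq_lintegral_of_nonneg_ae
    (Filter.Eventually.of_forall fun p => by positivity)
    ((Continuous.aestronglyMeasurable (by fun_prop)))]
  have h : ∫⁻ p, ENNReal.ofReal ((1/2) * |(p.2.1.1 - p.1.1) * (p.2.2.2 - p.1.2) -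
               (p.2.1.2 - p.1.2) * (p.2.2.1 - p.1.1)|) ∂μ6
      = ENNReal.ofReal (Real.sqrt 3 / 2) := EAT.main_lintegral
  rw [h, ENNReal.toReal_ofReal (by positivity)]
end
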